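/- arXiv:1004.1672 — 8 statements merged into one kernel-verified Lean document; each statement's English description precedes it below -/
import Mathlib

section
/- Let G be a simple undirected graph whose vertex set is partitioned into (V1, V2) such that both induced subgraphs G[V1] and G[V2] are forests. If a vertex w in V1 has two distinct neighbors lying in the same connected component of the induced subgraph G[V2], then every feedback vertex set of G that is contained in V1 must contain w. -/
/-- A feedback vertex set of `G` is a set `F` of vertices whose deletion leaves
an acyclic graph. -/
def IsFVS {V : Type*} (G : SimpleGraph V) (F : Set V) : Prop :=
  (G.induce (Fᶜ : Set V)).IsAcyclic

/-- If a vertex `w ∈ V1` has two distinct neighbors lying in the same connected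
component of `G[V2]`, then every feedback vertex set of `G` contained in `V1`
must contain `w`. -/
theorem stmt_0 {V : Type*} [Fintype V] (G : SimpleGraph V) (V1 V2 : Set V)
    (hpart : V1 ∪ V2 = Set.univ) (hdisj : Disjoint V1 V2)
    (hforest1 : (G.induce V1).IsAcyclic) (hforest2 : (G.induce V2).IsAcyclic)
    (w : V) (hw : w ∈ V1)
    (u1 u2 : V) (hu1 : u1 ∈ V2) (hu2 : u2 ∈ V2) (hne : u1 ≠ u2)
    (hadj1 : G.Adj w u1) (hadj2 : G.Adj w u2)
    (hreach : (G.induce V2).Reachable ⟨u1, hu1⟩ ⟨u2, hu2⟩) :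
    ∀ F : Set V, F ⊆ V1 → IsFVS G F → w ∈ F := by
  intro F hFV1 hFVS
  classical
  by_contra hwF
  -- V2 ⊆ Fᶜ
  have h2S : V2 ⊆ (Fᶜ : Set V) := fun v hv hvF =>
    hdisj.le_bot ⟨hFV1 hvF, hv⟩
  have hwS : w ∈ (Fᶜ : Set V) := hwF
  set S : Set V := (Fᶜ : Set V)
  -- lift vertices
  let w' : S := ⟨w, hwS⟩
  let u1' : S := ⟨u1, h2S hu1⟩
  let u2' : S := ⟨u2, h2S hu2⟩
  -- get a walk from u1 to u2 in induce V2
  obtain ⟨p0⟩ := hreach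
  -- map it into induce S
  let W : (G.induce S).Walk u1' u2' := p0.map (G.induceHomOfLE h2S).toHom
  have hWsupp : ∀ x ∈ W.support, (x : V) ∈ V2 := by
    intro x hx
    replace hx : x ∈ (p0.map (G.induceHomOfLE h2S).toHom).support := hx
    rw [SimpleGraph.Walk.support_map] at hx
    obtain ⟨y, _, rfl⟩ := List.mem_map.mp hx
    exact y.2
  -- take its path
  let P := W.toPath
  have hPsupp : ∀ x ∈ (P : (G.induce S).Walk u1' u2').support, (x : V) ∈ V2 := by
    intro x hx
    exact hWsupp x (SimpleGraph.Walk.support_bypass_subset W hx)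
  have hwV2 : w ∉ V2 := fun h => hdisj.le_bot ⟨hw, h⟩
  have hwP : w' ∉ (P : (G.induce S).Walk u1' u2').support := by
    intro h
    exact hwV2 (hPsupp w' h)
  have hadj1' : (G.induce S).Adj w' u1' := by simpa using hadj1
  have hadj2' : (G.induce S).Adj w' u2' := by simpa using hadj2
  -- two paths from w' to u2'
  let q1 : (G.induce S).Path w' u2' :=
    ⟨SimpleGraph.Walk.cons hadj1' (P : (G.induce S).Walk u1' u2'),
      P.2.cons hwP⟩
  let q2 : (G.induce S).Path w' u2' := SimpleGraph.Path.singleton hadj2'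
  have hq := SimpleGraph.isAcyclic_iff_path_unique.mp hFVS q1 q2
  -- u1' is in q1's support but not in q2's
  have h1 : u1' ∈ (q1 : (G.induce S).Walk w' u2').support := by
    simp [q1]
  have h2 : u1' ∉ (q2 : (G.induce S).Walk w' u2').support := by
    simp only [q2, SimpleGraph.Path.singleton, SimpleGraph.Walk.support_cons,
      SimpleGraph.Walk.support_nil, List.mem_cons, List.mem_singleton]
    rintro (h | h | h)
    · have h' : u1 = w := congrArg Subtype.val h
      exact hwV2 (h' ▸ hu1)
    · exact hne (congrArg Subtype.val h)
    · simp at h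
  rw [hq] at h1
  exact h2 h1
end

section
/- Let G be a simple undirected graph whose vertex set is partitioned into (V1, V2) such that both induced subgraphs G[V1] and G[V2] are forests, and let v be a vertex in V1 of degree exactly 2 in G whose two neighbors do not both lie in one connected component of G[V2]. If G has a V1-FVS of size k, then G has a V1-FVS of size at most k that does not contain v. -/
set_option maxHeartbeats 1000000

open SimpleGraph

section Helpers
variable {V : Type*} {G : SimpleGraph V}

lemma restrict_walk {S T : Set V} (hST : S ⊆ T) :
    ∀ {x y : T} (p : (G.induce T).Walk x y) (hx : x.1 ∈ S) (hy : y.1 ∈ S),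
      (∀ z ∈ p.support, z.1 ∈ S) →
      ∃ q : (G.induce S).Walk ⟨x.1, hx⟩ ⟨y.1, hy⟩,
        q.map (G.induceHomOfLE hST).toHom = p := by
  intro x y p
  induction p with
  | nil => intro hx hy _; exact ⟨.nil, rfl⟩
  | @cons x w y hadj p ih =>
    intro hx hy hsup
    have hw : w.1 ∈ S := hsup w (by simp)
    obtain ⟨q, hq⟩ := ih hw hy (fun z hz => hsup z (by simp [hz]))
    have hadj' : (G.induce S).Adj ⟨x.1, hx⟩ ⟨w.1, hw⟩ := hadj
    refine ⟨.cons hadj' q, ?_⟩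
    rw [Walk.map_cons, hq]
    rfl

lemma incl_injective {S T : Set V} (hST : S ⊆ T) :
    Function.Injective ((G.induceHomOfLE hST).toHom) :=
  fun a b hab => (G.induceHomOfLE hST).injective hab

lemma cycle_decomp {W : Type*} {H : SimpleGraph W} {v : W} (c : H.Walk v v) (hc : c.IsCycle) :
    ∃ (a b : W) (r : H.Walk a b), H.Adj v a ∧ H.Adj v b ∧ a ≠ b ∧ r.IsPath ∧
      v ∉ r.support ∧ (∀ z, z ∈ c.support ↔ z = v ∨ z ∈ r.support) := by
  cases c with
  | nil => simp [Walk.isCycle_def] at hc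
  | @cons _ a _ hadj p =>
    have hp : p.IsPath := ((Walk.cons_isCycle_iff p hadj).mp hc).1
    have hs : p.reverse.IsPath := hp.reverse
    have hns : ¬ p.reverse.Nil := Walk.not_nil_of_ne hadj.ne
    obtain ⟨b, hadj2, r0, hsc, hr0, hvr0⟩ : ∃ (b : W) (hadj2 : H.Adj v b)
        (r0 : H.Walk b a), Walk.cons hadj2 r0 = p.reverse ∧ r0.IsPath ∧ v ∉ r0.support := by
      rw [← Walk.cons_tail_eq p.reverse hns, Walk.cons_isPath_iff] at hs
      exact ⟨_, p.reverse.adj_snd hns, p.reverse.tail,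
        Walk.cons_tail_eq _ hns, hs.1, hs.2⟩
    have hplen : p.length = r0.length + 1 := by
      have := congrArg Walk.length hsc
      simp only [Walk.length_cons, Walk.length_reverse] at this
      omega
    have hab : a ≠ b := by
      intro h
      subst h
      have : r0 = Walk.nil := Walk.isPath_iff_eq_nil.mp hr0
      have h3 := hc.three_le_length
      simp only [Walk.length_cons, this, Walk.length_nil] at h3 hplen
      omega
    have hsupp : p.support = (Walk.cons hadj2 r0).support.reverse := by
      rw [hsc, Walk.support_reverse, List.reverse_reverse]
    refine ⟨a, b, r0.reverse, hadj, hadj2, hab, hr0.reverse, ?_, ?_⟩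
    · simp [Walk.support_reverse, hvr0]
    · intro z
      simp only [Walk.support_cons, List.mem_cons, hsupp, List.mem_reverse,
        Walk.support_reverse]
      tauto

lemma mem_of_mem_rotate_support {W : Type*} [DecidableEq W] {H : SimpleGraph W} {u z x : W}
    (c : H.Walk x x) (h : u ∈ c.support) (hz : z ∈ (c.rotate u h).support) :
    z ∈ c.support := by
  have h2 := hz
  rw [Walk.support_eq_cons (c.rotate u h), List.mem_cons] at h2
  rcases h2 with h2 | h2
  · exact h2 ▸ h
  · exact List.mem_of_mem_tail (((Walk.support_rotate c u h).mem_iff).mp h2)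

end Helpers



/-- If `v ∈ V1` has degree exactly 2 in `G` and its two neighbors do not both lie
in one connected component of `G[V2]`, and `G` has a `V1`-FVS of size `k`, then
`G` has a `V1`-FVS of size at most `k` not containing `v`. -/
theorem stmt_1 {V : Type*} [Fintype V] [DecidableEq V]
    (G : SimpleGraph V) [DecidableRel G.Adj] (V1 V2 : Set V)
    (hpart : V1 ∪ V2 = Set.univ) (hdisj : Disjoint V1 V2)
    (hforest1 : (G.induce V1).IsAcyclic) (hforest2 : (G.induce V2).IsAcyclic)
    (v : V) (hv : v ∈ V1) (hdeg : G.degree v = 2)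
    (hnbrs : ¬ ∃ (u1 u2 : V) (hu1 : u1 ∈ V2) (hu2 : u2 ∈ V2),
      u1 ≠ u2 ∧ G.Adj v u1 ∧ G.Adj v u2 ∧
        (G.induce V2).Reachable ⟨u1, hu1⟩ ⟨u2, hu2⟩)
    (k : ℕ) (F : Set V) (hFsub : F ⊆ V1) (hFVS : IsFVS G F) (hFcard : F.ncard = k) :
    ∃ F' : Set V, F' ⊆ V1 ∧ IsFVS G F' ∧ v ∉ F' ∧ F'.ncard ≤ k := by
  classical
  by_cases hvF : v ∈ F
  case neg => exact ⟨F, hFsub, hFVS, hvF, hFcard ▸ le_rfl⟩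
  set F0 : Set V := F \ {v} with hF0def
  have hF0sub : F0 ⊆ V1 := (Set.diff_subset).trans hFsub
  have hvF0 : v ∉ F0 := fun h => h.2 rfl
  have hF0card : F0.ncard + 1 = F.ncard := Set.ncard_diff_singleton_add_one hvF F.toFinite
  by_cases hF0 : IsFVS G F0
  case pos =>
    exact ⟨F0, hF0sub, hF0, hvF0, by omega⟩
  -- notation
  have hFK : (Fᶜ : Set V) ⊆ F0ᶜ := Set.compl_subset_compl.mpr Set.diff_subset
  have hsplit : ∀ x : V, x ∈ (F0ᶜ : Set V) → x ≠ v → x ∈ (Fᶜ : Set V) := by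
    intro x hx hxv hxF
    exact hx ⟨hxF, hxv⟩
  -- no cycle in induce F0ᶜ avoiding v
  have no_cycle_avoid : ∀ (x : (F0ᶜ : Set V)) (c : (G.induce (F0ᶜ : Set V)).Walk x x),
      c.IsCycle → (∀ z ∈ c.support, z.1 ≠ v) → False := by
    intro x c hcyc hav
    have hx : x.1 ∈ (Fᶜ : Set V) := hsplit x.1 x.2 (hav x c.start_mem_support)
    obtain ⟨q, hq⟩ := restrict_walk hFK c hx hx
      (fun z hz => hsplit z.1 z.2 (hav z hz))
    have hqc : q.IsCycle :=
      (Walk.map_isCycle_iff_of_injective (incl_injective hFK)).mp (hq ▸ hcyc)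
    exact hFVS q hqc
  -- get a cycle through v
  rw [IsFVS, SimpleGraph.IsAcyclic] at hF0
  push_neg at hF0
  obtain ⟨x, c, hcyc⟩ := hF0
  have hv0 : v ∈ (F0ᶜ : Set V) := hvF0
  set v' : (F0ᶜ : Set V) := ⟨v, hv0⟩ with hv'def
  have hvmem : v' ∈ c.support := by
    by_contra h
    refine no_cycle_avoid x c hcyc (fun z hz hzv => h ?_)
    have hzz : z = v' := Subtype.ext hzv
    exact hzz ▸ hz
  obtain ⟨a, b, r, hva, hvb, hab, hrpath, hvr, hrsupp⟩ :=
    cycle_decomp (c.rotate v' hvmem) (hcyc.rotate hvmem)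
  have hGva : G.Adj v a.1 := hva
  have hGvb : G.Adj v b.1 := hvb
  have hrF : ∀ z ∈ r.support, z.1 ∈ (Fᶜ : Set V) := by
    intro z hz
    refine hsplit z.1 z.2 (fun hzv => hvr ?_)
    have hzz : z = v' := Subtype.ext hzv
    exact hzz ▸ hz
  have ha' : a.1 ∈ (Fᶜ : Set V) := hrF a r.start_mem_support
  have hb' : b.1 ∈ (Fᶜ : Set V) := hrF b r.end_mem_support
  obtain ⟨q, hqmap⟩ := restrict_walk hFK r ha' hb' hrF
  have hqpath : q.IsPath :=
    (Walk.map_isPath_iff_of_injective (incl_injective hFK)).mp (hqmap ▸ hrpath)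
  have habval : a.1 ≠ b.1 := fun h => hab (Subtype.ext h)
  -- find w ∈ V1 on q
  have hwex : ∃ z ∈ q.support, z.1 ∈ V1 := by
    by_contra h
    push_neg at h
    have hV2 : ∀ z ∈ q.support, z.1 ∈ V2 := by
      intro z hz
      have : z.1 ∈ V1 ∪ V2 := hpart ▸ Set.mem_univ z.1
      exact this.resolve_left (h z hz)
    have haV2 : (⟨a.1, ha'⟩ : (Fᶜ : Set V)).1 ∈ (Fᶜ ∩ V2 : Set V) :=
      ⟨ha', hV2 _ q.start_mem_support⟩
    have hbV2 : (⟨b.1, hb'⟩ : (Fᶜ : Set V)).1 ∈ (Fᶜ ∩ V2 : Set V) :=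
      ⟨hb', hV2 _ q.end_mem_support⟩
    obtain ⟨q2, _⟩ := restrict_walk (G := G) (Set.inter_subset_left (s := Fᶜ) (t := V2))
      q haV2 hbV2 (fun z hz => ⟨z.2, hV2 z hz⟩)
    have q3 := q2.map (G.induceHomOfLE (Set.inter_subset_right (s := Fᶜ) (t := V2))).toHom
    exact hnbrs ⟨a.1, b.1, haV2.2, hbV2.2, habval, hGva, hGvb, ⟨q3⟩⟩
  obtain ⟨w', hw'q, hw'V1⟩ := hwex
  have hwF : w'.1 ∈ (Fᶜ : Set V) := w'.2
  have hwv : w'.1 ≠ v := fun h => hwF (h ▸ hvF)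
  -- the new FVS
  refine ⟨insert w'.1 F0, Set.insert_subset hw'V1 hF0sub, ?_, ?_, ?_⟩
  · -- IsFVS
    intro x2 c2 hcyc2
    have hF'sub : ((insert w'.1 F0)ᶜ : Set V) ⊆ (F0ᶜ : Set V) :=
      Set.compl_subset_compl.mpr (Set.subset_insert _ _)
    set c3 := c2.map (G.induceHomOfLE hF'sub).toHom with hc3def
    have hc3 : c3.IsCycle := hcyc2.map (incl_injective hF'sub)
    have hc3supp : ∀ z ∈ c3.support, z.1 ∉ insert w'.1 F0 := by
      intro z hz
      rw [hc3def, Walk.support_map] at hz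
      obtain ⟨z0, hz0, rfl⟩ := List.mem_map.mp hz
      exact z0.2
    by_cases hvc3 : v' ∈ c3.support
    case neg =>
      refine no_cycle_avoid _ c3 hc3 (fun z hz hzv => hvc3 ?_)
      have hzz : z = v' := Subtype.ext hzv
      exact hzz ▸ hz
    obtain ⟨a2, b2, r2, hva2, hvb2, hab2, hr2path, hvr2, hr2supp⟩ :=
      cycle_decomp (c3.rotate v' hvc3) (hc3.rotate hvc3)
    have hGva2 : G.Adj v a2.1 := hva2
    have hGvb2 : G.Adj v b2.1 := hvb2
    have hr2mem : ∀ z ∈ r2.support, z ∈ c3.support := by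
      intro z hz
      exact mem_of_mem_rotate_support c3 hvc3 (((hr2supp z).mpr (Or.inr hz)))
    have hr2F : ∀ z ∈ r2.support, z.1 ∈ (Fᶜ : Set V) := by
      intro z hz
      refine hsplit z.1 z.2 (fun hzv => hvr2 ?_)
      have hzz : z = v' := Subtype.ext hzv
      exact hzz ▸ hz
    have hr2w : ∀ z ∈ r2.support, z.1 ≠ w'.1 := by
      intro z hz hzw
      exact hc3supp z (hr2mem z hz) (hzw ▸ Set.mem_insert _ _)
    have ha2' : a2.1 ∈ (Fᶜ : Set V) := hr2F a2 r2.start_mem_support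
    have hb2' : b2.1 ∈ (Fᶜ : Set V) := hr2F b2 r2.end_mem_support
    obtain ⟨q4, hq4map⟩ := restrict_walk hFK r2 ha2' hb2' hr2F
    have hq4path : q4.IsPath :=
      (Walk.map_isPath_iff_of_injective (incl_injective hFK)).mp (hq4map ▸ hr2path)
    have hwq4 : w' ∉ q4.support := by
      intro h
      have : (G.induceHomOfLE hFK).toHom w' ∈ r2.support := by
        rw [← hq4map]
        erw [Walk.support_map]
        exact List.mem_map_of_mem h
      exact hr2w _ this rfl
    have hab2val : a2.1 ≠ b2.1 := fun h => hab2 (Subtype.ext h)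
    -- neighbor matching
    have hpairs : (a2.1 = a.1 ∧ b2.1 = b.1) ∨ (a2.1 = b.1 ∧ b2.1 = a.1) := by
      obtain ⟨n1, n2, hn12, hset⟩ := Finset.card_eq_two.mp hdeg
      have hmem : ∀ x : V, G.Adj v x → x = n1 ∨ x = n2 := by
        intro x hx
        have : x ∈ G.neighborFinset v := (G.mem_neighborFinset v x).mpr hx
        rw [hset] at this
        simpa using this
      rcases hmem _ hGva with h1 | h1 <;> rcases hmem _ hGvb with h2 | h2 <;>
          rcases hmem _ hGva2 with h3 | h3 <;> rcases hmem _ hGvb2 with h4 | h4 <;>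
        first
        | exact absurd (h1.trans h2.symm) habval
        | exact absurd (h3.trans h4.symm) hab2val
        | exact Or.inl ⟨h3.trans h1.symm, h4.trans h2.symm⟩
        | exact Or.inr ⟨h3.trans h2.symm, h4.trans h1.symm⟩
    have huniq := isAcyclic_iff_path_unique.mp hFVS
    rcases hpairs with ⟨hA, hB⟩ | ⟨hA, hB⟩
    · have hEa : (⟨a2.1, ha2'⟩ : (Fᶜ : Set V)) = ⟨a.1, ha'⟩ := Subtype.ext hA
      have hEb : (⟨b2.1, hb2'⟩ : (Fᶜ : Set V)) = ⟨b.1, hb'⟩ := Subtype.ext hB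
      have heq := huniq ⟨q, hqpath⟩ ⟨q4.copy hEa hEb, (Walk.isPath_copy _ hEa hEb).mpr hq4path⟩
      have : q = q4.copy hEa hEb := by exact Subtype.mk_eq_mk.mp heq
      rw [this, Walk.support_copy] at hw'q
      exact hwq4 hw'q
    · have hEa : (⟨b2.1, hb2'⟩ : (Fᶜ : Set V)) = ⟨a.1, ha'⟩ := Subtype.ext hB
      have hEb : (⟨a2.1, ha2'⟩ : (Fᶜ : Set V)) = ⟨b.1, hb'⟩ := Subtype.ext hA
      have heq := huniq ⟨q, hqpath⟩ ⟨(q4.reverse).copy hEa hEb, (Walk.isPath_copy _ hEa hEb).mpr hq4path.reverse⟩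
      have : q = (q4.reverse).copy hEa hEb := by exact Subtype.mk_eq_mk.mp heq
      rw [this, Walk.support_copy] at hw'q
      rw [Walk.support_reverse, List.mem_reverse] at hw'q
      exact hwq4 hw'q
  · -- v ∉ F'
    rw [Set.mem_insert_iff]
    push_neg
    exact ⟨fun h => hwv h.symm, hvF0⟩
  · calc (insert w'.1 F0).ncard ≤ F0.ncard + 1 := Set.ncard_insert_le _ _
      _ = F.ncard := hF0card
      _ = k := hFcard
end

section
/- Let G be a simple undirected graph whose vertex set is partitioned into (V1, V2) such that both induced subgraphs G[V1] and G[V2] are forests, and let v be a vertex in V1 of degree exactly 2 in G whose two neighbors lie in distinct connected components of G[V2] (or at least one neighbor lies in V1). Then G has a V1-FVS of size at most k if and only if the partition (V1 \ {v}, V2 ∪ {v}) (which still induces two forests) admits a (V1 \ {v})-FVS of size at most k. -/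
open SimpleGraph


section Aux
variable {V : Type*} {G : SimpleGraph V}

lemma exists_induce_walk {s : Set V} {x y : V}
    (p : G.Walk x y) (hs : ∀ z ∈ p.support, z ∈ s) (hx : x ∈ s) (hy : y ∈ s) :
    ∃ q : (G.induce s).Walk ⟨x, hx⟩ ⟨y, hy⟩,
      q.map (SimpleGraph.Embedding.induce s).toHom = p := by
  induction p with
  | nil => exact ⟨.nil, rfl⟩
  | @cons a b c h p ih =>
    have hb : b ∈ s := hs b (by simp)
    obtain ⟨q, hq⟩ := ih (fun z hz => hs z (by simp [hz])) hb hy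
    exact ⟨.cons (by exact h) q, by subst hq; rfl⟩

lemma isFVS_iff (G : SimpleGraph V) (F : Set V) :
    IsFVS G F ↔ ∀ (x : V) (c : G.Walk x x), c.IsCycle → ∃ y ∈ c.support, y ∈ F := by
  constructor
  · intro h x c hc
    by_contra hcon
    push_neg at hcon
    have hx : x ∈ (Fᶜ : Set V) := hcon x c.start_mem_support
    obtain ⟨q, hq⟩ := exists_induce_walk (s := (Fᶜ : Set V)) c
      (fun z hz => hcon z hz) hx hx
    have : q.IsCycle := by
      rw [← Walk.map_isCycle_iff_of_injective
        (f := (SimpleGraph.Embedding.induce (Fᶜ : Set V)).toHom) Subtype.val_injective, hq]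
      exact hc
    exact h q this
  · intro h x c hc
    have hc' : (c.map (SimpleGraph.Embedding.induce (Fᶜ : Set V)).toHom).IsCycle :=
      hc.map Subtype.val_injective
    obtain ⟨y, hy, hyF⟩ := h _ _ hc'
    rw [Walk.support_map] at hy
    obtain ⟨z, hz, rfl⟩ := List.mem_map.mp hy
    exact z.prop hyF

variable [DecidableEq V]

lemma cycle_through {x v : V} {c : G.Walk x x} (hc : c.IsCycle) (hvc : v ∈ c.support) :
    ∃ (a b : V) (q : G.Walk a b), a ≠ b ∧ G.Adj v a ∧ G.Adj v b ∧ v ∉ q.support ∧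
      (∀ z ∈ q.support, z ∈ c.support) := by
  set c' : G.Walk v v := c.rotate v hvc with hc'def
  have hc' : c'.IsCycle := hc.rotate hvc
  have hsub : ∀ z ∈ c'.support, z ∈ c.support := by
    intro z hz
    rw [c'.support_eq_cons] at hz
    rw [List.mem_cons] at hz
    rcases hz with rfl | hz
    · exact hvc
    · have := (Walk.support_rotate c v hvc).mem_iff.mp hz
      rw [c.support_eq_cons]
      exact List.mem_cons_of_mem _ this
  cases hcc : c' with
  | nil => rw [hcc] at hc'; simp [Walk.isCycle_def] at hc'
  | @cons _ a _ h q =>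
    rw [hcc] at hc'
    rw [Walk.cons_isCycle_iff] at hc'
    obtain ⟨hqp, hqe⟩ := hc'
    have hqr : q.reverse.IsPath := hqp.reverse
    obtain ⟨b, h2, r, hr⟩ := Walk.exists_eq_cons_of_ne h.ne q.reverse
    rw [hr, Walk.cons_isPath_iff] at hqr
    obtain ⟨hrp, hvr⟩ := hqr
    have hab : a ≠ b := by
      rintro rfl
      apply hqe
      have : s(v, a) ∈ q.reverse.edges := by rw [hr]; simp
      rw [Walk.edges_reverse, List.mem_reverse] at this
      exact this
    refine ⟨b, a, r, fun hba => hab hba.symm, h2, h, hvr, ?_⟩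
    intro z hz
    apply hsub
    rw [hcc, Walk.support_cons]
    apply List.mem_cons_of_mem
    have : z ∈ q.reverse.support := by rw [hr, Walk.support_cons]; exact List.mem_cons_of_mem _ hz
    rw [Walk.support_reverse, List.mem_reverse] at this
    exact this

lemma pair_eq [Fintype V] [DecidableRel G.Adj] {v a b x y : V} (hdeg : G.degree v = 2)
    (hab : a ≠ b) (hva : G.Adj v a) (hvb : G.Adj v b)
    (hxy : x ≠ y) (hvx : G.Adj v x) (hvy : G.Adj v y) :
    (x = a ∧ y = b) ∨ (x = b ∧ y = a) := by
  have h1 : ({a, b} : Finset V) = G.neighborFinset v := by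
    apply Finset.eq_of_subset_of_card_le
    · intro z hz
      rw [Finset.mem_insert, Finset.mem_singleton] at hz
      rcases hz with rfl | rfl <;> rwa [mem_neighborFinset]
    · have h2 : (G.neighborFinset v).card = 2 := hdeg
      rw [h2, Finset.card_insert_of_notMem (by simpa using hab), Finset.card_singleton]
  have hx : x ∈ ({a, b} : Finset V) := by rw [h1, mem_neighborFinset]; exact hvx
  have hy : y ∈ ({a, b} : Finset V) := by rw [h1, mem_neighborFinset]; exact hvy
  rw [Finset.mem_insert, Finset.mem_singleton] at hx hy
  rcases hx with rfl | rfl <;> rcases hy with rfl | rfl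
  · exact absurd rfl hxy
  · exact Or.inl ⟨rfl, rfl⟩
  · exact Or.inr ⟨rfl, rfl⟩
  · exact absurd rfl hxy

end Aux

/-- For a degree-2 vertex `v ∈ V1` whose two neighbors do not both lie in a single
connected component of `G[V2]` (i.e. they lie in distinct components of `G[V2]`,
or at least one of them lies in `V1`), the graph `G` has a `V1`-FVS of size at
most `k` if and only if it has a `(V1 \ {v})`-FVS of size at most `k`
(corresponding to the new partition `(V1 \ {v}, V2 ∪ {v})`). -/
theorem stmt_2 {V : Type*} [Fintype V] [DecidableEq V]
    (G : SimpleGraph V) [DecidableRel G.Adj] (V1 V2 : Set V)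
    (hpart : V1 ∪ V2 = Set.univ) (hdisj : Disjoint V1 V2)
    (hforest1 : (G.induce V1).IsAcyclic) (hforest2 : (G.induce V2).IsAcyclic)
    (v : V) (hv : v ∈ V1) (hdeg : G.degree v = 2)
    (hnbrs : ¬ ∃ (u1 u2 : V) (hu1 : u1 ∈ V2) (hu2 : u2 ∈ V2),
      u1 ≠ u2 ∧ G.Adj v u1 ∧ G.Adj v u2 ∧
        (G.induce V2).Reachable ⟨u1, hu1⟩ ⟨u2, hu2⟩)
    (k : ℕ) :
    (∃ F : Set V, F ⊆ V1 ∧ IsFVS G F ∧ F.ncard ≤ k) ↔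
    (∃ F : Set V, F ⊆ V1 \ {v} ∧ IsFVS G F ∧ F.ncard ≤ k) := by
  constructor
  swap
  · rintro ⟨F, hF1, hFvs, hFk⟩
    exact ⟨F, fun x hx => (hF1 hx).1, hFvs, hFk⟩
  rintro ⟨F, hF1, hFvs, hFk⟩
  by_cases hvF : v ∈ F
  swap
  · exact ⟨F, fun x hx => ⟨hF1 hx, fun hxv => hvF (Set.mem_singleton_iff.mp hxv ▸ hx)⟩, hFvs, hFk⟩
  have hacy : (G.induce (Fᶜ : Set V)).IsAcyclic := hFvs
  rw [isFVS_iff] at hFvs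
  by_cases hex : ∃ (x : V) (c : G.Walk x x), c.IsCycle ∧ ∀ y ∈ c.support, y ∉ F \ {v}
  swap
  · push_neg at hex
    refine ⟨F \ {v}, fun x hx => ⟨hF1 hx.1, hx.2⟩, ?_, ?_⟩
    · rw [isFVS_iff]
      intro x c hc
      obtain ⟨y, hy, hyF⟩ := hex x c hc
      exact ⟨y, hy, hyF⟩
    · exact le_trans (Set.ncard_le_ncard Set.diff_subset F.toFinite) hFk
  obtain ⟨x0, c0, hc0, hc0F⟩ := hex
  -- the cycle c0 must pass through v
  have hvc0 : v ∈ c0.support := by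
    obtain ⟨y, hy, hyF⟩ := hFvs x0 c0 hc0
    have := hc0F y hy
    have : y = v := by by_contra hne; exact this ⟨hyF, hne⟩
    exact this ▸ hy
  obtain ⟨a, b, q0, hab, hva, hvb, hvq0, hq0sub⟩ := cycle_through hc0 hvc0
  have hq0F : ∀ z ∈ q0.support, z ∈ (Fᶜ : Set V) := by
    intro z hz
    intro hzF
    have hzv : z ≠ v := fun h => hvq0 (h ▸ hz)
    exact hc0F z (hq0sub z hz) ⟨hzF, hzv⟩
  have ha : a ∈ (Fᶜ : Set V) := hq0F a q0.start_mem_support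
  have hb : b ∈ (Fᶜ : Set V) := hq0F b q0.end_mem_support
  obtain ⟨q0', hq0'⟩ := exists_induce_walk q0 hq0F ha hb
  set P0 := q0'.bypass with hP0def
  have hP0 : P0.IsPath := Walk.bypass_isPath q0'
  -- find w on P0 lying in V1
  have hwex : ∃ w0 ∈ P0.support, (w0 : V) ∈ V1 := by
    by_contra hcon
    push_neg at hcon
    have hPV2 : ∀ z ∈ (P0.map (SimpleGraph.Embedding.induce (Fᶜ : Set V)).toHom).support,
        z ∈ V2 := by
      intro z hz
      rw [Walk.support_map] at hz
      obtain ⟨w0, hw0, rfl⟩ := List.mem_map.mp hz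
      have : (w0 : V) ∉ V1 := hcon w0 hw0
      have h3 : (w0 : V) ∈ V1 ∪ V2 := hpart ▸ Set.mem_univ _
      rcases h3 with h3 | h3
      · exact absurd h3 this
      · exact h3
    set Pd := P0.map (SimpleGraph.Embedding.induce (Fᶜ : Set V)).toHom with hPd
    have haV2 : a ∈ V2 := hPV2 a Pd.start_mem_support
    have hbV2 : b ∈ V2 := hPV2 b Pd.end_mem_support
    obtain ⟨Q, -⟩ := exists_induce_walk Pd hPV2 haV2 hbV2
    exact hnbrs ⟨a, b, haV2, hbV2, hab, hva, hvb, ⟨Q⟩⟩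
  obtain ⟨w0, hw0P0, hw0V1⟩ := hwex
  set w : V := (w0 : V) with hwdef
  have hwF : w ∉ F := w0.prop
  have hwv : w ≠ v := fun h => hwF (h ▸ hvF)
  refine ⟨insert w (F \ {v}), ?_, ?_, ?_⟩
  · rintro z (rfl | hz)
    · exact ⟨hw0V1, hwv⟩
    · exact ⟨hF1 hz.1, hz.2⟩
  · rw [isFVS_iff]
    intro x c hc
    by_cases hcF : ∃ y ∈ c.support, y ∈ F \ {v}
    · obtain ⟨y, hy, hyF⟩ := hcF
      exact ⟨y, hy, Or.inr hyF⟩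
    push_neg at hcF
    -- c passes through v, and contains the unique path P0, hence w
    have hvc : v ∈ c.support := by
      obtain ⟨y, hy, hyF⟩ := hFvs x c hc
      have : y = v := by by_contra hne; exact hcF y hy ⟨hyF, hne⟩
      exact this ▸ hy
    obtain ⟨a', b', q, hab', hva', hvb', hvq, hqsub⟩ := cycle_through hc hvc
    have hqF : ∀ z ∈ q.support, z ∈ (Fᶜ : Set V) := by
      intro z hz hzF
      have hzv : z ≠ v := fun h => hvq (h ▸ hz)
      exact hcF z (hqsub z hz) ⟨hzF, hzv⟩
    have hwq : w ∈ q.support := by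
      rcases pair_eq hdeg hab hva hvb hab' hva' hvb' with ⟨rfl, rfl⟩ | ⟨rfl, rfl⟩
      · obtain ⟨q', hq'⟩ := exists_induce_walk q hqF ha hb
        have hPeq : q'.bypass = P0 := by
          have := SimpleGraph.isAcyclic_iff_path_unique.mp hacy
            ⟨q'.bypass, q'.bypass_isPath⟩ ⟨P0, hP0⟩
          exact congrArg Subtype.val this
        have : w0 ∈ q'.support := q'.support_bypass_subset (hPeq ▸ hw0P0)
        have : w ∈ (q'.map (SimpleGraph.Embedding.induce (Fᶜ : Set V)).toHom).support := by
          rw [Walk.support_map]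
          exact List.mem_map_of_mem this
        rwa [hq'] at this
      · obtain ⟨q', hq'⟩ := exists_induce_walk q hqF hb ha
        have hPeq : q'.reverse.bypass = P0 := by
          have := SimpleGraph.isAcyclic_iff_path_unique.mp hacy
            ⟨q'.reverse.bypass, q'.reverse.bypass_isPath⟩ ⟨P0, hP0⟩
          exact congrArg Subtype.val this
        have h1 : w0 ∈ q'.reverse.support := q'.reverse.support_bypass_subset (hPeq ▸ hw0P0)
        rw [Walk.support_reverse, List.mem_reverse] at h1
        have : w ∈ (q'.map (SimpleGraph.Embedding.induce (Fᶜ : Set V)).toHom).support := by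
          rw [Walk.support_map]
          exact List.mem_map_of_mem h1
        rwa [hq'] at this
    exact ⟨w, hqsub w hwq, Or.inl rfl⟩
  · calc (insert w (F \ {v})).ncard ≤ (F \ {v}).ncard + 1 := Set.ncard_insert_le _ _
      _ = F.ncard := Set.ncard_diff_singleton_add_one hvF F.toFinite
      _ ≤ k := hFk
end

section
/- Let G be a simple undirected graph whose vertex set is partitioned into (V1, V2) such that both induced subgraphs G[V1] and G[V2] are forests, and suppose every vertex of V1 has degree at least 3 in G. Let l be the number of connected components of G[V2] and τ the number of connected components of G[V1]. If |V1| > 2k + l − τ, then G has no V1-FVS of size at most k. -/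
open SimpleGraph Finset

private lemma reach_delete_aux {V : Type*} {G : SimpleGraph V} (a b : V) {x y : V}
    (h : G.Reachable x y) :
    (G \ fromEdgeSet {s(a,b)}).Reachable x y ∨
    ((G \ fromEdgeSet {s(a,b)}).Reachable x a ∧ (G \ fromEdgeSet {s(a,b)}).Reachable b y) ∨
    ((G \ fromEdgeSet {s(a,b)}).Reachable x b ∧ (G \ fromEdgeSet {s(a,b)}).Reachable a y) := by
  obtain ⟨p⟩ := h
  induction p with
  | nil => exact Or.inl (Reachable.refl _)
  | @cons x z y hxz p ih =>
    by_cases he : s(x, z) = s(a, b)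
    · rw [Sym2.eq_iff] at he
      rcases he with ⟨rfl, rfl⟩ | ⟨rfl, rfl⟩
      · rcases ih with h1 | ⟨h1, h2⟩ | ⟨h1, h2⟩
        · exact Or.inr (Or.inl ⟨Reachable.refl _, h1⟩)
        · exact Or.inr (Or.inl ⟨Reachable.refl _, h2⟩)
        · exact Or.inl h2
      · rcases ih with h1 | ⟨h1, h2⟩ | ⟨h1, h2⟩
        · exact Or.inr (Or.inr ⟨Reachable.refl _, h1⟩)
        · exact Or.inl h2
        · exact Or.inr (Or.inr ⟨Reachable.refl _, h2⟩)
    · have hadj : (G \ fromEdgeSet {s(a,b)}).Adj x z := by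
        rw [sdiff_adj, fromEdgeSet_adj]
        exact ⟨hxz, fun hc => he hc.1⟩
      rcases ih with h1 | ⟨h1, h2⟩ | ⟨h1, h2⟩
      · exact Or.inl (hadj.reachable.trans h1)
      · exact Or.inr (Or.inl ⟨hadj.reachable.trans h1, h2⟩)
      · exact Or.inr (Or.inr ⟨hadj.reachable.trans h1, h2⟩)

private lemma card_cc_delete {V : Type*} [Finite V] {G : SimpleGraph V} {a b : V}
    (hab : G.Adj a b) (hnr : ¬ (G \ fromEdgeSet {s(a,b)}).Reachable a b) :
    Nat.card (G \ fromEdgeSet {s(a,b)}).ConnectedComponent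
      = Nat.card G.ConnectedComponent + 1 := by
  classical
  set G' := G \ fromEdgeSet {s(a,b)} with hG'
  have hle : G' ≤ G := sdiff_le
  let π : G'.ConnectedComponent → G.ConnectedComponent :=
    ConnectedComponent.map (Hom.ofLE hle)
  have hπ : ∀ v, π (G'.connectedComponentMk v) = G.connectedComponentMk v := fun v => rfl
  letI : Fintype V := Fintype.ofFinite V
  letI : Fintype G.ConnectedComponent := Fintype.ofFinite _
  letI : Fintype G'.ConnectedComponent := Fintype.ofFinite _
  rw [Nat.card_eq_fintype_card, Nat.card_eq_fintype_card, ← Finset.card_univ, ← Finset.card_univ]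
  rw [Finset.card_eq_sum_card_fiberwise (f := π) (t := Finset.univ) (fun x _ => Finset.mem_univ _)]
  have key : ∀ C : G.ConnectedComponent,
      (Finset.univ.filter fun D => π D = C).card
        = if C = G.connectedComponentMk a then 2 else 1 := by
    intro C
    induction C using SimpleGraph.ConnectedComponent.ind with
    | _ x =>
    by_cases hx : G.connectedComponentMk x = G.connectedComponentMk a
    · rw [hx, if_pos rfl]
      have hset : (Finset.univ.filter fun D => π D = G.connectedComponentMk a)
          = {G'.connectedComponentMk a, G'.connectedComponentMk b} := by
        ext D
        induction D using SimpleGraph.ConnectedComponent.ind with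
        | _ y =>
        simp only [Finset.mem_filter, Finset.mem_univ, true_and, Finset.mem_insert,
          Finset.mem_singleton, hπ, SimpleGraph.ConnectedComponent.eq]
        constructor
        · intro h
          rcases reach_delete_aux a b h with h1 | ⟨h1, h2⟩ | ⟨h1, h2⟩
          · exact Or.inl h1
          · exact absurd h2.symm hnr
          · exact Or.inr h1
        · rintro (h | h)
          · exact h.mono hle
          · exact (h.mono hle).trans hab.symm.reachable
      rw [hset, Finset.card_insert_of_notMem, Finset.card_singleton]
      rw [Finset.mem_singleton]
      intro hcon
      exact hnr (SimpleGraph.ConnectedComponent.eq.mp hcon)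
    · rw [if_neg hx]
      have hset : (Finset.univ.filter fun D => π D = G.connectedComponentMk x)
          = {G'.connectedComponentMk x} := by
        ext D
        induction D using SimpleGraph.ConnectedComponent.ind with
        | _ y =>
        simp only [Finset.mem_filter, Finset.mem_univ, true_and, Finset.mem_singleton,
          hπ, SimpleGraph.ConnectedComponent.eq]
        constructor
        · intro h
          rcases reach_delete_aux a b h with h1 | ⟨h1, h2⟩ | ⟨h1, h2⟩
          · exact h1
          · exact absurd (SimpleGraph.ConnectedComponent.eq.mpr
              ((h2.mono hle).symm.trans hab.symm.reachable)) hx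
          · exact absurd (SimpleGraph.ConnectedComponent.eq.mpr (h2.mono hle).symm) hx
        · intro h
          exact h.mono hle
      rw [hset, Finset.card_singleton]
  rw [Finset.sum_congr rfl (fun C _ => key C)]
  have h2 : ∀ C : G.ConnectedComponent,
      (if C = G.connectedComponentMk a then 2 else 1)
        = (if C = G.connectedComponentMk a then 1 else 0) + 1 := by
    intro C; split <;> rfl
  simp only [h2, Finset.sum_add_distrib, Finset.sum_ite_eq', Finset.mem_univ, if_pos,
    Finset.sum_const, Finset.card_univ, smul_eq_mul, mul_one]
  omega

private lemma forest_formula_aux {V : Type*} [Fintype V] :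
    ∀ (n : ℕ) (G : SimpleGraph V), G.IsAcyclic → Nat.card G.edgeSet = n →
      n + Nat.card G.ConnectedComponent = Fintype.card V := by
  intro n
  induction n using Nat.strong_induction_on with
  | _ n ih =>
    intro G hG hn
    classical
    rcases eq_or_ne n 0 with rfl | hn0
    · have hbot : G = ⊥ := by
        rw [← edgeSet_eq_empty]
        rw [Nat.card_coe_set_eq] at hn
        exact Set.ncard_eq_zero (Set.toFinite _) |>.mp hn
      subst hbot
      have hbij : Function.Bijective ((⊥ : SimpleGraph V).connectedComponentMk) :=
        ⟨fun u v h => reachable_bot.mp (ConnectedComponent.eq.mp h),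
         fun C => C.exists_rep⟩
      rw [zero_add, ← Nat.card_eq_of_bijective _ hbij, Nat.card_eq_fintype_card]
    · have hne : G.edgeSet.Nonempty := by
        rw [Set.nonempty_iff_ne_empty]
        intro h
        rw [h] at hn
        simp at hn
        exact hn0 hn.symm
      obtain ⟨e, he⟩ := hne
      induction e using Sym2.ind with
      | _ a b =>
      rw [mem_edgeSet] at he
      have hbridge := (isAcyclic_iff_forall_adj_isBridge.mp hG) he
      have hnr : ¬ (G \ fromEdgeSet {s(a,b)}).Reachable a b := isBridge_iff.mp hbridge
      have hG'acyclic : (G \ fromEdgeSet {s(a,b)}).IsAcyclic :=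
        fun v c hc => hG (c.mapLe sdiff_le) (hc.mapLe _)
      have hedge : Nat.card (G \ fromEdgeSet {s(a,b)}).edgeSet = n - 1 := by
        have h1 : (G \ fromEdgeSet {s(a,b)}).edgeSet = G.edgeSet \ {s(a,b)} := by
          rw [edgeSet_sdiff, edgeSet_fromEdgeSet, edgeSet_sdiff_sdiff_isDiag]
        rw [h1, Nat.card_coe_set_eq,
          Set.ncard_diff_singleton_of_mem (show s(a,b) ∈ G.edgeSet from (mem_edgeSet G).mpr he),
          ← Nat.card_coe_set_eq, hn]
      have hcc := card_cc_delete he hnr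
      have hih := ih (n-1) (by omega) _ hG'acyclic hedge
      omega

private lemma sum_set_toFinset' {V M : Type*} [AddCommMonoid M] (s : Set V) [Fintype ↥s]
    (f : V → M) : ∑ x : ↥s, f ↑x = ∑ x ∈ s.toFinset, f x := by
  rw [← Finset.sum_coe_sort s.toFinset f]
  exact Fintype.sum_equiv (Equiv.subtypeEquivRight (fun x => by simp)) _ _ (fun x => rfl)

private lemma degree_eq_sum {V : Type*} [Fintype V] (G : SimpleGraph V) [DecidableRel G.Adj]
    (v : V) : G.degree v = ∑ u : V, (if G.Adj v u then 1 else 0) := by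
  rw [← card_neighborFinset_eq_degree, neighborFinset_eq_filter, Finset.card_filter]

set_option maxHeartbeats 1000000 in
private lemma two_mul_card_induce {V : Type*} [Fintype V] [DecidableEq V]
    (G : SimpleGraph V) [DecidableRel G.Adj] (s : Set V) [Fintype ↥s] :
    2 * Nat.card (G.induce s).edgeSet
      = ∑ v ∈ s.toFinset, ∑ u ∈ s.toFinset, (if G.Adj v u then 1 else 0) := by
  classical
  letI : DecidableRel (G.induce s).Adj := Classical.decRel _
  rw [Nat.card_eq_fintype_card, ← edgeFinset_card, ← sum_degrees_eq_twice_card_edges]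
  have hdeg : ∀ x : ↥s, (G.induce s).degree x
      = ∑ u ∈ s.toFinset, (if G.Adj ↑x u then 1 else 0) := by
    intro x
    rw [degree_eq_sum, ← sum_set_toFinset' s (fun u => if G.Adj ↑x u then 1 else 0)]
    exact Finset.sum_congr rfl fun u _ => by congr 1
  rw [Finset.sum_congr rfl (fun x _ => hdeg x),
    sum_set_toFinset' s (fun v => ∑ u ∈ s.toFinset, (if G.Adj v u then 1 else 0))]

set_option maxHeartbeats 2000000 in
/-- If every vertex of `V1` has degree at least 3 in `G` and
`|V1| > 2k + l − τ`, where `l` is the number of connected components of `G[V2]`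
and `τ` is the number of connected components of `G[V1]`, then `G` has no
`V1`-FVS of size at most `k`. -/
theorem stmt_3 {V : Type*} [Fintype V] [DecidableEq V]
    (G : SimpleGraph V) [DecidableRel G.Adj] (V1 V2 : Set V)
    (hpart : V1 ∪ V2 = Set.univ) (hdisj : Disjoint V1 V2)
    (hforest1 : (G.induce V1).IsAcyclic) (hforest2 : (G.induce V2).IsAcyclic)
    (hdeg : ∀ v ∈ V1, 3 ≤ G.degree v)
    (k l τ : ℕ)
    (hl : l = Nat.card (G.induce V2).ConnectedComponent)
    (hτ : τ = Nat.card (G.induce V1).ConnectedComponent)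
    (hbig : (V1.ncard : ℤ) > 2 * (k : ℤ) + (l : ℤ) - (τ : ℤ)) :
    ¬ ∃ F : Set V, F ⊆ V1 ∧ IsFVS G F ∧ F.ncard ≤ k := by
  classical
  rintro ⟨F, hFV1, hFVS, hFk⟩
  letI : Fintype ↥V1 := Fintype.ofFinite _
  letI : Fintype ↥V2 := Fintype.ofFinite _
  letI : Fintype ↥(V1 \ F) := Fintype.ofFinite _
  letI : Fintype ↥F := Fintype.ofFinite _
  letI : Fintype ↥(Fᶜ : Set V) := Fintype.ofFinite _
  set f : V → V → ℕ := fun v u => if G.Adj v u then 1 else 0 with hf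
  set A : Finset V := (V1 \ F).toFinset with hA
  set B : Finset V := F.toFinset with hB
  set C : Finset V := V2.toFinset with hC
  have hmemA : ∀ v, v ∈ A ↔ v ∈ V1 ∧ v ∉ F := by intro v; simp [hA]
  have hmemB : ∀ v, v ∈ B ↔ v ∈ F := by intro v; simp [hB]
  have hmemC : ∀ v, v ∈ C ↔ v ∈ V2 := by intro v; simp [hC]
  have hV1V2 : ∀ v, v ∈ V1 → v ∉ V2 := fun v h1 h2 => Set.disjoint_left.mp hdisj h1 h2
  have hV12 : ∀ v : V, v ∈ V1 ∨ v ∈ V2 := fun v => by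
    have : v ∈ V1 ∪ V2 := hpart.symm ▸ Set.mem_univ v
    exact this
  have hABdisj : Disjoint A B := Finset.disjoint_left.mpr
    (fun v hv hv' => ((hmemA v).mp hv).2 ((hmemB v).mp hv'))
  have hACdisj : Disjoint A C := Finset.disjoint_left.mpr
    (fun v hv hv' => hV1V2 v ((hmemA v).mp hv).1 ((hmemC v).mp hv'))
  have hBCdisj : Disjoint B C := Finset.disjoint_left.mpr
    (fun v hv hv' => hV1V2 v (hFV1 ((hmemB v).mp hv)) ((hmemC v).mp hv'))
  have hABCdisj : Disjoint (A ∪ B) C := Finset.disjoint_union_left.mpr ⟨hACdisj, hBCdisj⟩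
  have hV1Finset : V1.toFinset = A ∪ B := by
    ext v
    simp only [Set.mem_toFinset, Finset.mem_union, hmemA, hmemB]
    constructor
    · intro h
      by_cases hvF : v ∈ F
      · exact Or.inr hvF
      · exact Or.inl ⟨h, hvF⟩
    · rintro (⟨h, _⟩ | h)
      · exact h
      · exact hFV1 h
  have hcomplFinset : (Fᶜ : Set V).toFinset = A ∪ C := by
    ext v
    simp only [Set.mem_toFinset, Set.mem_compl_iff, Finset.mem_union, hmemA, hmemC]
    constructor
    · intro h
      rcases hV12 v with h1 | h2
      · exact Or.inl ⟨h1, h⟩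
      · exact Or.inr h2
    · rintro (⟨_, h⟩ | h)
      · exact h
      · exact fun hvF => hV1V2 v (hFV1 hvF) h
  have hunivFinset : (Finset.univ : Finset V) = (A ∪ B) ∪ C := by
    ext v
    simp only [Finset.mem_univ, true_iff, Finset.mem_union, hmemA, hmemB, hmemC]
    rcases hV12 v with h1 | h2
    · by_cases hvF : v ∈ F
      · exact Or.inl (Or.inr hvF)
      · exact Or.inl (Or.inl ⟨h1, hvF⟩)
    · exact Or.inr h2
  -- symmetry of double sums
  have hsymm : ∀ X Y : Finset V, (∑ v ∈ X, ∑ u ∈ Y, f v u) = ∑ v ∈ Y, ∑ u ∈ X, f v u := by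
    intro X Y
    rw [Finset.sum_comm]
    exact Finset.sum_congr rfl fun y _ => Finset.sum_congr rfl fun x _ =>
      if_congr (G.adj_comm x y) rfl rfl
  -- expansion of double sums over unions
  have expand : ∀ X Y : Finset V, Disjoint X Y →
      (∑ v ∈ X ∪ Y, ∑ u ∈ X ∪ Y, f v u)
        = (∑ v ∈ X, ∑ u ∈ X, f v u) + (∑ v ∈ X, ∑ u ∈ Y, f v u)
          + ((∑ v ∈ Y, ∑ u ∈ X, f v u) + (∑ v ∈ Y, ∑ u ∈ Y, f v u)) := by
    intro X Y h
    rw [Finset.sum_union h]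
    congr 1
    · rw [← Finset.sum_add_distrib]
      exact Finset.sum_congr rfl fun v _ => Finset.sum_union h
    · rw [← Finset.sum_add_distrib]
      exact Finset.sum_congr rfl fun v _ => Finset.sum_union h
  -- edge counts
  have h1 : 2 * Nat.card (G.induce V1).edgeSet
      = ∑ v ∈ A ∪ B, ∑ u ∈ A ∪ B, f v u := by
    rw [two_mul_card_induce G V1, hV1Finset]
  have h2 : 2 * Nat.card (G.induce V2).edgeSet = ∑ v ∈ C, ∑ u ∈ C, f v u := by
    rw [two_mul_card_induce G V2, hC]
  have hT : 2 * Nat.card (G.induce (Fᶜ : Set V)).edgeSet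
      = ∑ v ∈ A ∪ C, ∑ u ∈ A ∪ C, f v u := by
    rw [two_mul_card_induce G (Fᶜ : Set V), hcomplFinset]
  rw [expand A B hABdisj] at h1
  rw [expand A C hACdisj] at hT
  rw [hsymm B A] at h1
  rw [hsymm C A] at hT
  -- forest formulas
  have hf1 := forest_formula_aux (Nat.card (G.induce V1).edgeSet) (G.induce V1) hforest1 rfl
  have hf2 := forest_formula_aux (Nat.card (G.induce V2).edgeSet) (G.induce V2) hforest2 rfl
  have hfT := forest_formula_aux (Nat.card (G.induce (Fᶜ : Set V)).edgeSet)
    (G.induce (Fᶜ : Set V)) hFVS rfl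
  -- cardinalities
  have hcard1 : Fintype.card ↥V1 = A.card + B.card := by
    rw [← Set.toFinset_card, hV1Finset, Finset.card_union_of_disjoint hABdisj]
  have hcard2 : Fintype.card ↥V2 = C.card := by rw [← Set.toFinset_card, hC]
  have hcardT : Fintype.card ↥(Fᶜ : Set V) = A.card + C.card := by
    rw [← Set.toFinset_card, hcomplFinset, Finset.card_union_of_disjoint hACdisj]
  have hncard1 : V1.ncard = A.card + B.card := by
    rw [Set.ncard_eq_toFinset_card', hV1Finset, Finset.card_union_of_disjoint hABdisj]
  have hBk : B.card ≤ k := by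
    rw [hB, ← Set.ncard_eq_toFinset_card']
    exact hFk
  -- degree sum
  have hdeg3 : 3 * A.card ≤ (∑ v ∈ A, ∑ u ∈ A, f v u) + (∑ v ∈ A, ∑ u ∈ B, f v u)
      + (∑ v ∈ A, ∑ u ∈ C, f v u) := by
    have step1 : A.card • 3 ≤ ∑ v ∈ A, G.degree v :=
      Finset.card_nsmul_le_sum A _ 3 (fun v hv => hdeg v ((hmemA v).mp hv).1)
    have step2 : ∑ v ∈ A, G.degree v = (∑ v ∈ A, ∑ u ∈ A, f v u)
        + (∑ v ∈ A, ∑ u ∈ B, f v u) + (∑ v ∈ A, ∑ u ∈ C, f v u) := by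
      have : ∀ v, G.degree v = (∑ u ∈ A, f v u) + (∑ u ∈ B, f v u) + (∑ u ∈ C, f v u) := by
        intro v
        rw [degree_eq_sum, show (Finset.univ : Finset V) = (A ∪ B) ∪ C from hunivFinset,
          Finset.sum_union hABCdisj, Finset.sum_union hABdisj]
      rw [Finset.sum_congr rfl fun v _ => this v, Finset.sum_add_distrib, Finset.sum_add_distrib]
    calc 3 * A.card = A.card • 3 := by rw [smul_eq_mul, mul_comm]
      _ ≤ ∑ v ∈ A, G.degree v := step1
      _ = _ := step2
  -- τ ≤ |V1|
  have hτle : τ ≤ A.card + B.card := by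
    rw [hτ, ← hcard1, ← Nat.card_eq_fintype_card]
    exact Nat.card_le_card_of_surjective _ (fun D => D.exists_rep)
  -- A is nonempty
  have hApos : 0 < A.card := by
    rw [hncard1] at hbig
    push_cast at hbig
    omega
  obtain ⟨v, hv⟩ := Finset.card_pos.mp hApos
  have hvF : v ∈ (Fᶜ : Set V) := ((hmemA v).mp hv).2
  have hcT : 1 ≤ Nat.card (G.induce (Fᶜ : Set V)).ConnectedComponent := by
    have : Nonempty (G.induce (Fᶜ : Set V)).ConnectedComponent :=
      ⟨(G.induce (Fᶜ : Set V)).connectedComponentMk ⟨v, hvF⟩⟩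
    exact Nat.card_pos
  -- final arithmetic
  rw [hcard1] at hf1
  rw [hcard2] at hf2
  rw [hcardT] at hfT
  rw [hncard1] at hbig
  rw [← hl] at hf2
  rw [← hτ] at hf1
  push_cast at hbig
  omega
end

section
/- Let G be a simple undirected graph whose vertex set is partitioned into (V1, V2) such that both induced subgraphs G[V1] and G[V2] are forests, every vertex of V1 has degree at least 3 in G, V1 is nonempty, and the number of connected components of G[V2] is at most k + 1. If |V1| > 3k, then G has no V1-FVS of size at most k. -/
open Finset

namespace FVSAuxiliary

variable {W : Type*}

/-- Walk case analysis after deleting one edge. -/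
lemma reach_cases {H : SimpleGraph W} (a b : W) {v w : W} (p : H.Walk v w) :
    (H.deleteEdges {s(a,b)}).Reachable v w ∨
    ((H.deleteEdges {s(a,b)}).Reachable v a ∧ (H.deleteEdges {s(a,b)}).Reachable b w) ∨
    ((H.deleteEdges {s(a,b)}).Reachable v b ∧ (H.deleteEdges {s(a,b)}).Reachable a w) := by
  induction p with
  | nil => exact Or.inl (SimpleGraph.Reachable.refl _)
  | @cons u x w hadj p ih =>
    by_cases he : s(u, x) = s(a, b)
    · rcases Sym2.eq_iff.mp he with ⟨rfl, rfl⟩ | ⟨rfl, rfl⟩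
      · rcases ih with h | ⟨h1, h2⟩ | ⟨h1, h2⟩
        · exact Or.inr (Or.inl ⟨SimpleGraph.Reachable.refl _, h⟩)
        · exact Or.inl (h1.symm.trans h2)
        · exact Or.inl h2
      · rcases ih with h | ⟨h1, h2⟩ | ⟨h1, h2⟩
        · exact Or.inr (Or.inr ⟨SimpleGraph.Reachable.refl _, h⟩)
        · exact Or.inl h2
        · exact Or.inl (h1.symm.trans h2)
    · have hadj' : (H.deleteEdges {s(a,b)}).Adj u x := by
        simp only [SimpleGraph.deleteEdges_adj, Set.mem_singleton_iff]
        exact ⟨hadj, he⟩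
      rcases ih with h | ⟨h1, h2⟩ | ⟨h1, h2⟩
      · exact Or.inl (hadj'.reachable.trans h)
      · exact Or.inr (Or.inl ⟨hadj'.reachable.trans h1, h2⟩)
      · exact Or.inr (Or.inr ⟨hadj'.reachable.trans h1, h2⟩)

lemma card_cc_deleteEdges_le [Finite W] (H : SimpleGraph W) (a b : W) :
    Nat.card (H.deleteEdges {s(a,b)}).ConnectedComponent ≤
      Nat.card H.ConnectedComponent + 1 := by
  classical
  set H' := H.deleteEdges {s(a,b)} with hH'
  have hle : H' ≤ H := H.deleteEdges_le _
  let φ : H'.ConnectedComponent → H.ConnectedComponent :=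
    fun C => C.map (SimpleGraph.Hom.ofLE hle)
  have hrw : ∀ x : W, φ (H'.connectedComponentMk x) = H.connectedComponentMk x := fun x =>
    SimpleGraph.ConnectedComponent.map_mk _ _
  let ψ : H'.ConnectedComponent → Option H.ConnectedComponent :=
    fun C => if C = H'.connectedComponentMk a then none else some (φ C)
  have hinj : Function.Injective ψ := by
    intro C D hCD
    by_cases hC : C = H'.connectedComponentMk a <;>
      by_cases hD : D = H'.connectedComponentMk a
    · rw [hC, hD]
    · simp only [ψ, if_pos hC, if_neg hD] at hCD
      cases hCD
    · simp only [ψ, if_neg hC, if_pos hD] at hCD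
      cases hCD
    · simp only [ψ, if_neg hC, if_neg hD, Option.some.injEq] at hCD
      obtain ⟨v, rfl⟩ := C.exists_rep
      obtain ⟨w, rfl⟩ := D.exists_rep
      have hvw : H.Reachable v w := by
        have h2 : φ (H'.connectedComponentMk v) = φ (H'.connectedComponentMk w) := hCD
        rw [hrw, hrw] at h2
        exact SimpleGraph.ConnectedComponent.eq.mp h2
      obtain ⟨p⟩ := hvw
      rcases reach_cases a b p with h | ⟨h1, _⟩ | ⟨_, h2⟩
      · exact SimpleGraph.ConnectedComponent.sound h
      · exact absurd (SimpleGraph.ConnectedComponent.sound h1) hC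
      · exact absurd (SimpleGraph.ConnectedComponent.sound h2.symm) hD
  have hft : Fintype H.ConnectedComponent := Fintype.ofFinite _
  calc Nat.card H'.ConnectedComponent
      ≤ Nat.card (Option H.ConnectedComponent) := Nat.card_le_card_of_injective ψ hinj
    _ = Nat.card H.ConnectedComponent + 1 := by
        simp [Nat.card_eq_fintype_card, Fintype.card_option]

lemma card_cc_lt_of_bridge [Finite W] {H : SimpleGraph W} {a b : W} (hadj : H.Adj a b)
    (hnr : ¬ (H.deleteEdges {s(a,b)}).Reachable a b) :
    Nat.card H.ConnectedComponent < Nat.card (H.deleteEdges {s(a,b)}).ConnectedComponent := by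
  classical
  set H' := H.deleteEdges {s(a,b)} with hH'
  have hle : H' ≤ H := H.deleteEdges_le _
  let φ : H'.ConnectedComponent → H.ConnectedComponent :=
    fun C => C.map (SimpleGraph.Hom.ofLE hle)
  have hφmk : ∀ x : W, φ (H'.connectedComponentMk x) = H.connectedComponentMk x := fun x =>
    SimpleGraph.ConnectedComponent.map_mk _ _
  have hsurj : Function.Surjective φ := by
    intro C
    obtain ⟨v, rfl⟩ := C.exists_rep
    exact ⟨H'.connectedComponentMk v, hφmk v⟩
  have hninj : ¬ Function.Injective φ := by
    intro hinj
    apply hnr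
    have h1 : φ (H'.connectedComponentMk a) = φ (H'.connectedComponentMk b) := by
      rw [hφmk, hφmk]
      exact SimpleGraph.ConnectedComponent.sound hadj.reachable
    exact (SimpleGraph.ConnectedComponent.eq).mp (hinj h1)
  have i1 : Fintype H.ConnectedComponent := Fintype.ofFinite _
  have i2 : Fintype H'.ConnectedComponent := Fintype.ofFinite _
  rw [Nat.card_eq_fintype_card, Nat.card_eq_fintype_card]
  exact Fintype.card_lt_of_surjective_not_injective φ hsurj hninj

lemma isAcyclic_deleteEdges {H : SimpleGraph W} (hH : H.IsAcyclic) (s : Set (Sym2 W)) :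
    (H.deleteEdges s).IsAcyclic := by
  intro v c hc
  exact hH (c.mapLe (H.deleteEdges_le s))
    ((SimpleGraph.Walk.mapLe_isCycle (H.deleteEdges_le s)).mpr hc)

lemma card_cc_bot_eq [Finite W] : Nat.card (⊥ : SimpleGraph W).ConnectedComponent
    = Nat.card W := by
  have hbij : Function.Bijective ((⊥ : SimpleGraph W).connectedComponentMk) := by
    constructor
    · intro v w hvw
      have := SimpleGraph.ConnectedComponent.eq.mp hvw
      simpa using this
    · intro C; exact C.exists_rep
  exact (Nat.card_eq_of_bijective _ hbij).symm

lemma edgeSet_empty_of_card_zero {H : SimpleGraph W} (hn : Nat.card H.edgeSet = 0)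
    [Finite W] : H = ⊥ := by
  apply SimpleGraph.edgeSet_eq_empty.mp
  rw [Nat.card_eq_zero] at hn
  rcases hn with h | h
  · exact Set.eq_empty_iff_forall_notMem.mpr fun e he => h.false ⟨e, he⟩
  · have : Finite (Sym2 W) := inferInstance
    have : Finite H.edgeSet := Finite.Set.subset _ (Set.subset_univ _)
    exact absurd h (not_infinite_iff_finite.mpr this)

/-- Any finite graph: `#V ≤ #E + #components`. -/
lemma card_le_card_edges_add_card_cc [Finite W] :
    ∀ (n : ℕ) (H : SimpleGraph W), Nat.card H.edgeSet = n →
      Nat.card W ≤ n + Nat.card H.ConnectedComponent := by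
  intro n
  induction n with
  | zero =>
    intro H hn
    have hbot : H = ⊥ := edgeSet_empty_of_card_zero hn
    subst hbot
    rw [card_cc_bot_eq]
    omega
  | succ n ih =>
    intro H hn
    have hne : H.edgeSet.Nonempty := by
      rw [Set.nonempty_iff_ne_empty]
      intro h
      rw [h] at hn
      simp at hn
    obtain ⟨e, he⟩ := hne
    induction e using Sym2.ind with
    | _ a b =>
    set H' := H.deleteEdges {s(a,b)} with hH'
    have hcard' : Nat.card H'.edgeSet = n := by
      have hset : H'.edgeSet = H.edgeSet \ {s(a,b)} := SimpleGraph.edgeSet_deleteEdges _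
      rw [hset]
      have h1 : Nat.card ↥(H.edgeSet \ {s(a,b)}) = (H.edgeSet \ {s(a,b)}).ncard :=
        Nat.card_coe_set_eq _
      have h2 : Nat.card ↥H.edgeSet = H.edgeSet.ncard := Nat.card_coe_set_eq _
      rw [h1, Set.ncard_diff_singleton_of_mem he]
      omega
    have hih : Nat.card W ≤ n + Nat.card H'.ConnectedComponent := ih H' hcard'
    have hcc : Nat.card H'.ConnectedComponent ≤ Nat.card H.ConnectedComponent + 1 :=
      card_cc_deleteEdges_le H a b
    omega

/-- Acyclic finite graph: `#E + #components ≤ #V`. -/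
lemma card_edges_add_card_cc_le_card [Finite W] :
    ∀ (n : ℕ) (H : SimpleGraph W), H.IsAcyclic → Nat.card H.edgeSet = n →
      n + Nat.card H.ConnectedComponent ≤ Nat.card W := by
  intro n
  induction n with
  | zero =>
    intro H _ hn
    have hbot : H = ⊥ := edgeSet_empty_of_card_zero hn
    subst hbot
    rw [card_cc_bot_eq]
    omega
  | succ n ih =>
    intro H hac hn
    have hne : H.edgeSet.Nonempty := by
      rw [Set.nonempty_iff_ne_empty]
      intro h
      rw [h] at hn
      simp at hn
    obtain ⟨e, he⟩ := hne
    induction e using Sym2.ind with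
    | _ a b =>
    have hadj : H.Adj a b := he
    set H' := H.deleteEdges {s(a,b)} with hH'
    have hcard' : Nat.card H'.edgeSet = n := by
      have hset : H'.edgeSet = H.edgeSet \ {s(a,b)} := SimpleGraph.edgeSet_deleteEdges _
      rw [hset]
      have h1 : Nat.card ↥(H.edgeSet \ {s(a,b)}) = (H.edgeSet \ {s(a,b)}).ncard :=
        Nat.card_coe_set_eq _
      have h2 : Nat.card ↥H.edgeSet = H.edgeSet.ncard := Nat.card_coe_set_eq _
      rw [h1, Set.ncard_diff_singleton_of_mem he]
      omega
    have hbridge : H.IsBridge s(a,b) :=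
      (SimpleGraph.isAcyclic_iff_forall_adj_isBridge.mp hac) hadj
    have hnr : ¬ H'.Reachable a b := (SimpleGraph.isBridge_iff.mp hbridge)
    have hcc : Nat.card H.ConnectedComponent < Nat.card H'.ConnectedComponent :=
      card_cc_lt_of_bridge hadj hnr
    have hih : n + Nat.card H'.ConnectedComponent ≤ Nat.card W :=
      ih H' (isAcyclic_deleteEdges hac _) hcard'
    omega

end FVSAuxiliary

section EdgeCounting

variable {V : Type*} [Fintype V] [DecidableEq V] (G : SimpleGraph V) [DecidableRel G.Adj]

lemma sum_set_coe_finset {M : Type*} [AddCommMonoid M] (A : Finset V) (f : V → M) :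
    ∑ x : (A : Set V), f ↑x = ∑ x ∈ A, f x := by
  rw [← Finset.sum_coe_sort A f]
  exact Fintype.sum_equiv (Equiv.subtypeEquivRight (fun x => Finset.mem_coe)) _ _ (fun x => rfl)

/-- Double counting: twice the number of edges of the induced graph on a finset. -/
lemma two_mul_card_induce_edgeSet (A : Finset V) :
    2 * Nat.card (G.induce (A : Set V)).edgeSet = ∑ v ∈ A, #(A.filter (G.Adj v)) := by
  classical
  have hdr : DecidableRel (G.induce (A : Set V)).Adj := fun x y => by
    simp only [SimpleGraph.comap_adj, Function.Embedding.coe_subtype]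
    infer_instance
  haveI := hdr
  haveI : Fintype (G.induce (A : Set V)).edgeSet := Fintype.ofFinite _
  have hhs := SimpleGraph.sum_degrees_eq_twice_card_edges (G.induce (A : Set V))
  have hdeg : ∀ v : (A : Set V), (G.induce (A : Set V)).degree v
      = #(A.filter (G.Adj ↑v)) := by
    intro v
    rw [← SimpleGraph.card_neighborFinset_eq_degree, SimpleGraph.neighborFinset_eq_filter,
      Finset.card_filter, Finset.card_filter]
    calc (∑ w : (A : Set V), if (G.induce (A : Set V)).Adj v w then 1 else 0)
        = ∑ w : (A : Set V), if G.Adj ↑v ↑w then 1 else 0 := by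
          apply Finset.sum_congr rfl
          intro w _
          congr 1
      _ = ∑ w ∈ A, if G.Adj ↑v w then 1 else 0 :=
          sum_set_coe_finset A (fun w => if G.Adj ↑v w then 1 else 0)
  have hsum : ∑ v : (A : Set V), (G.induce (A : Set V)).degree v
      = ∑ v ∈ A, #(A.filter (G.Adj v)) := by
    rw [Finset.sum_congr rfl fun v _ => hdeg v]
    exact sum_set_coe_finset A (fun v => #(A.filter (G.Adj v)))
  rw [← hsum, hhs]
  simp [Nat.card_eq_fintype_card, SimpleGraph.edgeFinset_card]
  rw [Set.ncard_eq_toFinset_card']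
  congr 1
  ext
  simp

end EdgeCounting

/-- If every vertex of `V1` has degree at least 3 in `G`, `V1` is nonempty, the
number of connected components of `G[V2]` is at most `k + 1`, and `|V1| > 3k`,
then `G` has no `V1`-FVS of size at most `k`. -/
theorem stmt_4 {V : Type*} [Fintype V] [DecidableEq V]
    (G : SimpleGraph V) [DecidableRel G.Adj] (V1 V2 : Set V)
    (hpart : V1 ∪ V2 = Set.univ) (hdisj : Disjoint V1 V2)
    (hforest1 : (G.induce V1).IsAcyclic) (hforest2 : (G.induce V2).IsAcyclic)
    (hdeg : ∀ v ∈ V1, 3 ≤ G.degree v)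
    (hne : V1.Nonempty)
    (k : ℕ)
    (hl : Nat.card (G.induce V2).ConnectedComponent ≤ k + 1)
    (hbig : V1.ncard > 3 * k) :
    ¬ ∃ F : Set V, F ⊆ V1 ∧ IsFVS G F ∧ F.ncard ≤ k := by
  classical
  rintro ⟨F, hFV1, hFVS, hFk⟩
  set S : Set V := V1 \ F with hS
  have hSV1 : S ⊆ V1 := Set.diff_subset
  have hV1eq : V1 = S ∪ F := by
    rw [hS, Set.diff_union_of_subset hFV1]
  have hFV2 : Disjoint F V2 := hdisj.mono_left hFV1
  have hFc : Fᶜ = S ∪ V2 := by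
    apply Set.eq_of_subset_of_subset
    · intro x hx
      have hxu : x ∈ V1 ∪ V2 := hpart ▸ Set.mem_univ x
      rcases hxu with h | h
      · exact Or.inl ⟨h, hx⟩
      · exact Or.inr h
    · rintro x (⟨_, hx⟩ | hx)
      · exact hx
      · exact fun hxF => (hFV2.ne_of_mem hxF hx) rfl
  have hSdisjF : Disjoint S F := Set.disjoint_sdiff_left
  have hSdisjV2 : Disjoint S V2 := hdisj.mono_left hSV1
  -- finsets
  set Sf : Finset V := (Set.toFinite S).toFinset with hSfdef
  set Ff : Finset V := (Set.toFinite F).toFinset with hFfdef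
  set V1f : Finset V := (Set.toFinite V1).toFinset with hV1fdef
  set V2f : Finset V := (Set.toFinite V2).toFinset with hV2fdef
  set Fcf : Finset V := (Set.toFinite (Fᶜ)).toFinset with hFcfdef
  have hSfc : (Sf : Set V) = S := Set.Finite.coe_toFinset _
  have hFfc : (Ff : Set V) = F := Set.Finite.coe_toFinset _
  have hV1fc : (V1f : Set V) = V1 := Set.Finite.coe_toFinset _
  have hV2fc : (V2f : Set V) = V2 := Set.Finite.coe_toFinset _
  have hFcfc : (Fcf : Set V) = (Fᶜ : Set V) := Set.Finite.coe_toFinset _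
  have hV1f : V1f = Sf ∪ Ff := by
    apply Finset.coe_injective
    rw [Finset.coe_union, hSfc, hFfc, hV1fc, hV1eq]
  have hFcf : Fcf = Sf ∪ V2f := by
    apply Finset.coe_injective
    rw [Finset.coe_union, hSfc, hV2fc, hFcfc, hFc]
  have hunivf : (Finset.univ : Finset V) = (Sf ∪ Ff) ∪ V2f := by
    apply Finset.coe_injective
    rw [Finset.coe_union, Finset.coe_union, hSfc, hFfc, hV2fc, Finset.coe_univ,
      ← hV1eq, hpart]
  have hdSF : Disjoint Sf Ff := by
    rw [← Finset.disjoint_coe, hSfc, hFfc]; exact hSdisjF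
  have hdSV2 : Disjoint Sf V2f := by
    rw [← Finset.disjoint_coe, hSfc, hV2fc]; exact hSdisjV2
  have hdV1V2 : Disjoint (Sf ∪ Ff) V2f := by
    rw [← Finset.disjoint_coe, Finset.coe_union, hSfc, hFfc, hV2fc, ← hV1eq]; exact hdisj
  -- the directed pair-count function
  set d : Finset V → Finset V → ℕ :=
    fun A B => ∑ v ∈ A, #(B.filter (G.Adj v)) with hd
  have hd_union_right : ∀ A B C : Finset V, Disjoint B C →
      d A (B ∪ C) = d A B + d A C := by
    intro A B C hBC
    simp only [hd, Finset.filter_union]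
    rw [← Finset.sum_add_distrib]
    apply Finset.sum_congr rfl
    intro v _
    exact Finset.card_union_of_disjoint (Finset.disjoint_filter_filter hBC)
  have hd_union_left : ∀ A B C : Finset V, Disjoint A B →
      d (A ∪ B) C = d A C + d B C := fun A B C h => Finset.sum_union h
  have hd_symm : ∀ A B : Finset V, d A B = d B A := by
    intro A B
    simp only [hd, Finset.card_filter]
    rw [Finset.sum_comm]
    apply Finset.sum_congr rfl
    intro v _
    apply Finset.sum_congr rfl
    intro w _
    congr 1
    simp only [eq_iff_iff]
    constructor <;> intro h <;> exact h.symm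
  -- cardinalities
  have hnV1card : V1.ncard = #V1f := Set.ncard_eq_toFinset_card _ _
  have hnFcard : F.ncard = #Ff := Set.ncard_eq_toFinset_card _ _
  have hnV2card : V2.ncard = #V2f := Set.ncard_eq_toFinset_card _ _
  have hcardV1f : #V1f = #Sf + #Ff := by rw [hV1f, Finset.card_union_of_disjoint hdSF]
  have hcardFcf : #Fcf = #Sf + #V2f := by rw [hFcf, Finset.card_union_of_disjoint hdSV2]
  have hnFk : #Ff ≤ k := hnFcard ▸ hFk
  -- edge counts
  set e1 := Nat.card (G.induce V1).edgeSet with he1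
  set e2 := Nat.card (G.induce V2).edgeSet with he2
  set eT := Nat.card (G.induce (Fᶜ : Set V)).edgeSet with heT
  have h1 : 2 * e1 = d V1f V1f := by
    have h := two_mul_card_induce_edgeSet G V1f
    rw [hV1fc] at h
    exact h
  have h2 : 2 * e2 = d V2f V2f := by
    have h := two_mul_card_induce_edgeSet G V2f
    rw [hV2fc] at h
    exact h
  have hT : 2 * eT = d Fcf Fcf := by
    have h := two_mul_card_induce_edgeSet G Fcf
    rw [hFcfc] at h
    exact h
  have hV1d : d V1f V1f = d Sf Sf + d Sf Ff + d Sf Ff + d Ff Ff := by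
    rw [hV1f, hd_union_left _ _ _ hdSF, hd_union_right _ _ _ hdSF,
      hd_union_right _ _ _ hdSF, hd_symm Ff Sf]
    ring
  have hTd : d Fcf Fcf = d Sf Sf + d Sf V2f + d Sf V2f + d V2f V2f := by
    rw [hFcf, hd_union_left _ _ _ hdSV2, hd_union_right _ _ _ hdSV2,
      hd_union_right _ _ _ hdSV2, hd_symm V2f Sf]
    ring
  -- degree sum lower bound
  have hdegsum : 3 * #Sf ≤ d Sf Sf + d Sf Ff + d Sf V2f := by
    have huniv : d Sf Finset.univ = d Sf Sf + d Sf Ff + d Sf V2f := by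
      rw [hunivf, hd_union_right _ _ _ hdV1V2, hd_union_right _ _ _ hdSF]
    have hdeg' : ∀ v ∈ Sf, 3 ≤ #(Finset.univ.filter (G.Adj v)) := by
      intro v hv
      have hvS : v ∈ S := by
        rw [← hSfc]
        exact_mod_cast hv
      have h := hdeg v (hSV1 hvS)
      rwa [← SimpleGraph.card_neighborFinset_eq_degree,
        SimpleGraph.neighborFinset_eq_filter] at h
    calc 3 * #Sf = ∑ _v ∈ Sf, 3 := by rw [Finset.sum_const, smul_eq_mul, mul_comm]
      _ ≤ d Sf Finset.univ := Finset.sum_le_sum hdeg'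
      _ = d Sf Sf + d Sf Ff + d Sf V2f := huniv
  -- forest bounds
  have hncV1 : Nat.card ↥V1 = #V1f := by
    rw [Nat.card_coe_set_eq, hnV1card]
  have hncV2 : Nat.card ↥V2 = #V2f := by
    rw [Nat.card_coe_set_eq, hnV2card]
  have hncFc : Nat.card ↥(Fᶜ : Set V) = #Fcf := by
    rw [Nat.card_coe_set_eq, Set.ncard_eq_toFinset_card _ _]
  -- nonemptiness facts
  have hSfpos : 1 ≤ #Sf := by
    rw [hnV1card, hcardV1f] at hbig
    omega
  obtain ⟨v0, hv0⟩ := Finset.card_pos.mp hSfpos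
  have hv0S : v0 ∈ S := by rw [← hSfc]; exact_mod_cast hv0
  have hv0V1 : v0 ∈ V1 := hSV1 hv0S
  have hv0Fc : v0 ∈ (Fᶜ : Set V) := by rw [hFc]; exact Or.inl hv0S
  -- forest bound for V1
  have hb1 : e1 + Nat.card (G.induce V1).ConnectedComponent ≤ #V1f := by
    have := FVSAuxiliary.card_edges_add_card_cc_le_card e1 (G.induce V1) hforest1 rfl
    rwa [hncV1] at this
  have hcc1pos : 1 ≤ Nat.card (G.induce V1).ConnectedComponent := by
    have : Nonempty (G.induce V1).ConnectedComponent :=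
      ⟨(G.induce V1).connectedComponentMk ⟨v0, hv0V1⟩⟩
    exact Nat.one_le_iff_ne_zero.mpr (Nat.card_ne_zero.mpr ⟨this, inferInstance⟩)
  -- forest bound for Fᶜ
  have hbT : eT + Nat.card (G.induce (Fᶜ : Set V)).ConnectedComponent ≤ #Fcf := by
    have := FVSAuxiliary.card_edges_add_card_cc_le_card eT (G.induce (Fᶜ : Set V)) hFVS rfl
    rwa [hncFc] at this
  have hccTpos : 1 ≤ Nat.card (G.induce (Fᶜ : Set V)).ConnectedComponent := by
    have : Nonempty (G.induce (Fᶜ : Set V)).ConnectedComponent :=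
      ⟨(G.induce (Fᶜ : Set V)).connectedComponentMk ⟨v0, hv0Fc⟩⟩
    exact Nat.one_le_iff_ne_zero.mpr (Nat.card_ne_zero.mpr ⟨this, inferInstance⟩)
  -- lower bound for V2
  have hb2 : #V2f ≤ e2 + Nat.card (G.induce V2).ConnectedComponent := by
    have := FVSAuxiliary.card_le_card_edges_add_card_cc e2 (G.induce V2) rfl
    rwa [hncV2] at this
  -- conclude
  rw [hnV1card, hcardV1f] at hbig
  omega
end

section
/- Let G be a connected simple undirected graph whose vertex set is partitioned into (V1, V2) such that both induced subgraphs G[V1] and G[V2] are forests and every vertex of V1 has degree exactly 3 in G. Let F be a minimum-size V1-FVS of G, and let T be a spanning tree of G containing all edges of the forest G − F. Let E2 be the set of edges of G not in T with both endpoints in F, and E1 the set of edges of G not in T with exactly one endpoint in F. Then each endpoint of each edge in E2 is incident to exactly one edge of E1, and no two edges of E2 share a common endpoint. -/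
open SimpleGraph in
lemma key_lemma {V : Type*} [Fintype V] [DecidableEq V]
    (G : SimpleGraph V) [DecidableRel G.Adj]
    (F : Set V) (T : SimpleGraph V) (hle : T ≤ G) (htree : T.IsTree)
    (hTF : ∀ u v : V, G.Adj u v → u ∉ F → v ∉ F → T.Adj u v)
    (u : V) (hu : u ∈ F) (hdegu : G.degree u = 3)
    (hcyc : ¬ (G.induce (((F \ {u}) : Set V)ᶜ : Set V)).IsAcyclic)
    (v : V) (hadj : G.Adj u v) (hvF : v ∈ F) (hvT : s(u,v) ∉ T.edgeSet) :
    ∃ w1 w2 : V, w1 ∉ F ∧ w2 ∉ F ∧ G.neighborFinset u = {v, w1, w2} ∧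
      s(u,w1) ∉ T.edgeSet ∧ s(u,w2) ∈ T.edgeSet := by
  classical
  set S : Set V := ((F \ {u}) : Set V)ᶜ with hS
  -- extract a cycle in `G.induce S`, map it into `G`
  unfold SimpleGraph.IsAcyclic at hcyc
  push_neg at hcyc
  obtain ⟨x, p, hp⟩ := hcyc
  have hinj : Function.Injective ((SimpleGraph.Embedding.induce (G := G) S)).toHom :=
    Subtype.val_injective
  have hc0 : (p.map ((SimpleGraph.Embedding.induce (G := G) S)).toHom).IsCycle :=
    (SimpleGraph.Walk.map_isCycle_iff_of_injective hinj).mpr hp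
  set c0 := p.map ((SimpleGraph.Embedding.induce (G := G) S)).toHom with hc0def
  have hsup0 : ∀ y ∈ c0.support, y ≠ u → y ∉ F := by
    intro y hy hyu hyF
    rw [hc0def, SimpleGraph.Walk.support_map] at hy
    obtain ⟨z, _, rfl⟩ := List.mem_map.mp hy
    exact z.2 ⟨hyF, hyu⟩
  -- u must be on the cycle
  by_cases hmem : u ∈ c0.support
  swap
  · exfalso
    have hedges : ∀ e ∈ c0.edges, e ∈ T.edgeSet := by
      intro e
      induction e with
      | _ x y =>
        intro he
        have hxy := c0.adj_of_mem_edges he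
        have hx := c0.fst_mem_support_of_mem_edges he
        have hy := c0.snd_mem_support_of_mem_edges he
        have hxu : x ≠ u := fun h => hmem (h ▸ hx)
        have hyu : y ≠ u := fun h => hmem (h ▸ hy)
        exact (hTF x y hxy (hsup0 x hx hxu) (hsup0 y hy hyu))
    exact htree.IsAcyclic _ (hc0.transfer hedges)
  -- rotate to start at u
  have hc : (c0.rotate u hmem).IsCycle := hc0.rotate hmem
  set c : G.Walk u u := c0.rotate u hmem with hcdef
  have hsupc : ∀ y ∈ c.support, y ≠ u → y ∉ F := by
    intro y hy hyu
    rw [SimpleGraph.Walk.support_eq_cons] at hy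
    rcases List.mem_cons.mp hy with hy | hy
    · exact absurd hy hyu
    · have := (SimpleGraph.Walk.support_rotate c0 u hmem).perm.mem_iff.mp hy
      exact hsup0 y (List.mem_of_mem_tail this) hyu
  have hlen3 : 3 ≤ c.length := hc.three_le_length
  clear_value c
  clear hcdef hc0def hc0 hsup0 hp
  -- decompose the cycle
  obtain ⟨w1, h1, q, rfl⟩ := SimpleGraph.Walk.not_nil_iff.mp hc.not_nil
  have hq : q.IsPath ∧ s(u, w1) ∉ q.edges :=
    (SimpleGraph.Walk.cons_isCycle_iff q h1).mp hc
  have hqrnil : ¬ q.reverse.Nil := by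
    rw [SimpleGraph.Walk.not_nil_iff_lt_length, SimpleGraph.Walk.length_reverse]
    rw [SimpleGraph.Walk.length_cons] at hlen3
    omega
  obtain ⟨w2, h2, q2, hq2⟩ := SimpleGraph.Walk.not_nil_iff.mp hqrnil
  have hqrp : q.reverse.IsPath := hq.1.reverse
  rw [hq2, SimpleGraph.Walk.cons_isPath_iff] at hqrp
  -- basic memberships
  have hw1supp : w1 ∈ (SimpleGraph.Walk.cons h1 q).support := by
    rw [SimpleGraph.Walk.support_cons]
    exact List.mem_cons_of_mem _ q.start_mem_support
  have hq2supp : ∀ y ∈ q2.support, y ∈ (SimpleGraph.Walk.cons h1 q).support := by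
    intro y hy
    have : y ∈ q.reverse.support := by
      rw [hq2, SimpleGraph.Walk.support_cons]
      exact List.mem_cons_of_mem _ hy
    rw [SimpleGraph.Walk.support_reverse, List.mem_reverse] at this
    rw [SimpleGraph.Walk.support_cons]
    exact List.mem_cons_of_mem _ this
  have hw2supp : w2 ∈ (SimpleGraph.Walk.cons h1 q).support :=
    hq2supp w2 q2.start_mem_support
  have hw1F : w1 ∉ F := hsupc w1 hw1supp h1.ne'
  have hw2F : w2 ∉ F := hsupc w2 hw2supp h2.ne'
  -- w1 ≠ w2
  have hw12 : w1 ≠ w2 := by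
    intro h
    subst h
    have : q2.length = 0 := by
      have hcopy : (q2.copy rfl rfl).IsPath := hqrp.1
      have := SimpleGraph.Walk.isPath_iff_eq_nil.mp hqrp.1
      rw [this]
      rfl
    have h1' : q.reverse.length = q2.length + 1 := by
      rw [hq2, SimpleGraph.Walk.length_cons]
    rw [SimpleGraph.Walk.length_reverse] at h1'
    rw [SimpleGraph.Walk.length_cons] at hlen3
    omega
  -- neighbor set is {v, w1, w2}
  have hvw1 : v ≠ w1 := fun h => hw1F (h ▸ hvF)
  have hvw2 : v ≠ w2 := fun h => hw2F (h ▸ hvF)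
  have hadj1 : G.Adj u w1 := h1
  have hadj2 : G.Adj u w2 := h2
  have hsub : ({v, w1, w2} : Finset V) ⊆ G.neighborFinset u := by
    intro x hx
    simp only [Finset.mem_insert, Finset.mem_singleton] at hx
    rw [SimpleGraph.mem_neighborFinset]
    rcases hx with rfl | rfl | rfl
    · exact hadj
    · exact hadj1
    · exact hadj2
  have hcard3 : ({v, w1, w2} : Finset V).card = 3 := by
    rw [Finset.card_insert_of_notMem (by simp [hvw1, hvw2]),
      Finset.card_insert_of_notMem (by simp [hw12]), Finset.card_singleton]
  have hNeq : G.neighborFinset u = {v, w1, w2} := by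
    refine (Finset.eq_of_subset_of_card_le hsub ?_).symm
    have : (G.neighborFinset u).card = 3 := hdegu
    omega
  -- not both tree edges
  have hboth : ¬ (s(u,w1) ∈ T.edgeSet ∧ s(u,w2) ∈ T.edgeSet) := by
    rintro ⟨ht1, ht2⟩
    have hrev : q.edges.reverse = s(u, w2) :: q2.edges := by
      rw [← SimpleGraph.Walk.edges_reverse, hq2, SimpleGraph.Walk.edges_cons]
    have hedges : ∀ e ∈ (SimpleGraph.Walk.cons h1 q).edges, e ∈ T.edgeSet := by
      intro e he
      rw [SimpleGraph.Walk.edges_cons, List.mem_cons] at he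
      rcases he with rfl | he
      · exact ht1
      · have he' : e ∈ s(u, w2) :: q2.edges := by
          rw [← hrev]
          exact List.mem_reverse.mpr he
        rcases List.mem_cons.mp he' with rfl | he2
        · exact ht2
        · revert he2
          induction e with
          | _ x y =>
            intro he2
            have hxy := q2.adj_of_mem_edges he2
            have hx := q2.fst_mem_support_of_mem_edges he2
            have hy := q2.snd_mem_support_of_mem_edges he2
            have hxu : x ≠ u := fun h => hqrp.2 (h ▸ hx)
            have hyu : y ≠ u := fun h => hqrp.2 (h ▸ hy)
            exact hTF x y hxy (hsupc x (hq2supp x hx) hxu)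
              (hsupc y (hq2supp y hy) hyu)
    exact htree.IsAcyclic _ (hc.transfer hedges)
  -- at least one tree edge at u among w1, w2
  have hone : s(u,w1) ∈ T.edgeSet ∨ s(u,w2) ∈ T.edgeSet := by
    obtain ⟨pw⟩ := htree.isConnected.preconnected u v
    cases pw with
    | nil => exact absurd rfl hadj.ne
    | cons h' pw' =>
      rename_i b
      have hb : s(u, b) ∈ T.edgeSet := h'
      have : b ∈ G.neighborFinset u := by rw [SimpleGraph.mem_neighborFinset]; exact hle h'
      rw [hNeq] at this
      simp only [Finset.mem_insert, Finset.mem_singleton] at this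
      rcases this with rfl | rfl | rfl
      · exact absurd hb hvT
      · exact Or.inl hb
      · exact Or.inr hb
  rcases hone with ht1 | ht2
  · refine ⟨w2, w1, hw2F, hw1F, ?_, fun h => hboth ⟨ht1, h⟩, ht1⟩
    rw [hNeq]
    exact congrArg (insert v) (Finset.pair_comm w1 w2)
  · exact ⟨w1, w2, hw1F, hw2F, hNeq, fun h => hboth ⟨h, ht2⟩, ht2⟩

/-- Let `G` be connected with partition `(V1, V2)` into two forests, where every
vertex of `V1` has degree exactly 3. Let `F` be a minimum `V1`-FVS and `T` a
spanning tree of `G` containing the forest `G − F`. With `E2` the edges of `G`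
not in `T` with both endpoints in `F` and `E1` those with exactly one endpoint
in `F`: each endpoint of each edge of `E2` is incident to exactly one edge of
`E1`, and no two distinct edges of `E2` share a common endpoint. -/
theorem stmt_8 {V : Type*} [Fintype V] [DecidableEq V]
    (G : SimpleGraph V) [DecidableRel G.Adj] (hconn : G.Connected)
    (V1 V2 : Set V)
    (hpart : V1 ∪ V2 = Set.univ) (hdisj : Disjoint V1 V2)
    (hforest1 : (G.induce V1).IsAcyclic) (hforest2 : (G.induce V2).IsAcyclic)
    (hdeg : ∀ v ∈ V1, G.degree v = 3)
    (F : Set V) (hFsub : F ⊆ V1) (hFVS : IsFVS G F)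
    (hmin : ∀ F' : Set V, F' ⊆ V1 → IsFVS G F' → F.ncard ≤ F'.ncard)
    (T : SimpleGraph V) (hle : T ≤ G) (htree : T.IsTree)
    (hTF : ∀ u v : V, G.Adj u v → u ∉ F → v ∉ F → T.Adj u v)
    (E1 E2 : Set (Sym2 V))
    (hE2 : E2 = {e | e ∈ G.edgeSet \ T.edgeSet ∧ ∀ u ∈ e, u ∈ F})
    (hE1 : E1 = {e | e ∈ G.edgeSet \ T.edgeSet ∧
      ∃ u v : V, e = s(u, v) ∧ u ∈ F ∧ v ∉ F}) :
    (∀ e ∈ E2, ∀ u : V, u ∈ e → ∃! e' : Sym2 V, e' ∈ E1 ∧ u ∈ e') ∧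
    (∀ e ∈ E2, ∀ e' ∈ E2, e ≠ e' → ∀ u : V, u ∈ e → u ∉ e') := by
  subst hE1 hE2
  have key : ∀ u : V, u ∈ F → ∀ v : V, G.Adj u v → v ∈ F → s(u,v) ∉ T.edgeSet →
      ∃ w1 w2 : V, w1 ∉ F ∧ w2 ∉ F ∧ G.neighborFinset u = {v, w1, w2} ∧
        s(u,w1) ∉ T.edgeSet ∧ s(u,w2) ∈ T.edgeSet := by
    intro u hu v hadj hvF hvT
    refine key_lemma G F T hle htree hTF u hu (hdeg u (hFsub hu)) ?_ v hadj hvF hvT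
    intro hac
    have h1 : IsFVS G (F \ {u}) := hac
    have h2 := hmin (F \ {u}) (Set.Subset.trans Set.diff_subset hFsub) h1
    have h3 : (F \ {u}).ncard < F.ncard :=
      Set.ncard_diff_singleton_lt_of_mem hu (Set.toFinite F)
    omega
  have mem_decomp : ∀ e ∈ G.edgeSet, ∀ u : V, u ∈ e → ∃ v, e = s(u,v) ∧ G.Adj u v := by
    intro e he u hue
    obtain ⟨w, rfl⟩ := Sym2.mem_iff_exists.mp hue
    exact ⟨w, rfl, he⟩
  constructor
  · rintro e ⟨⟨heG, heT⟩, heF⟩ u hue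
    have hu : u ∈ F := heF u hue
    obtain ⟨v, rfl, hadj⟩ := mem_decomp e heG u hue
    have hvF : v ∈ F := heF v (Sym2.mem_mk_right u v)
    obtain ⟨w1, w2, hw1F, hw2F, hN, hw1T, hw2T⟩ := key u hu v hadj hvF heT
    have hadj1 : G.Adj u w1 := by
      have : w1 ∈ G.neighborFinset u := by rw [hN]; simp
      rwa [SimpleGraph.mem_neighborFinset] at this
    refine ⟨s(u, w1), ⟨⟨⟨hadj1, hw1T⟩, u, w1, rfl, hu, hw1F⟩, Sym2.mem_mk_left u w1⟩, ?_⟩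
    rintro f ⟨⟨⟨hfG, hfT⟩, a, b, rfl, haF, hbF⟩, huf⟩
    rcases Sym2.mem_iff.mp huf with rfl | rfl
    swap
    · exact absurd hu hbF
    have hadjb : G.Adj u b := hfG
    have : b ∈ G.neighborFinset u := by rwa [SimpleGraph.mem_neighborFinset]
    rw [hN] at this
    simp only [Finset.mem_insert, Finset.mem_singleton] at this
    rcases this with rfl | rfl | rfl
    · exact absurd hvF hbF
    · rfl
    · exact absurd hw2T hfT
  · rintro e ⟨⟨heG, heT⟩, heF⟩ e' ⟨⟨heG', heT'⟩, heF'⟩ hne u hue hue'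
    have hu : u ∈ F := heF u hue
    obtain ⟨v, rfl, hadj⟩ := mem_decomp e heG u hue
    have hvF : v ∈ F := heF v (Sym2.mem_mk_right u v)
    obtain ⟨w1, w2, hw1F, hw2F, hN, hw1T, hw2T⟩ := key u hu v hadj hvF heT
    obtain ⟨v', he', hadj'⟩ := mem_decomp e' heG' u hue'
    have hv'F : v' ∈ F := heF' v' (by rw [he']; exact Sym2.mem_mk_right u v')
    have : v' ∈ G.neighborFinset u := by rwa [SimpleGraph.mem_neighborFinset]
    rw [hN] at this
    simp only [Finset.mem_insert, Finset.mem_singleton] at this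
    rcases this with rfl | rfl | rfl
    · exact hne (by rw [he'])
    · exact absurd hv'F hw1F
    · exact absurd hv'F hw2F
end

section
/- Let G be a connected simple undirected graph whose vertex set is partitioned into (V1, V2) such that both induced subgraphs G[V1] and G[V2] are forests and every vertex of V1 has degree exactly 3 in G. Then μ(G) ≥ β(G) − f_{V1}(G), where f_{V1}(G) is the minimum size of a V1-FVS of G, β(G) = |E(G)| − |V(G)| + 1 is the Betti number, and μ(G) is the V1-adjacency matching number of G. -/
open SimpleGraph

/-- Adding an edge between unreachable vertices preserves acyclicity. -/
lemma acyclic_sup_edge {V : Type*} {T : SimpleGraph V} (hT : T.IsAcyclic) {u v : V}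
    (hne : u ≠ v) (hr : ¬T.Reachable u v) : (T ⊔ SimpleGraph.edge u v).IsAcyclic := by
  intro w c hc
  by_cases he : s(u, v) ∈ c.edges
  · have h2 := (adj_and_reachable_delete_edges_iff_exists_cycle.mpr ⟨w, c, hc, he⟩).2
    apply hr
    refine h2.mono ?_
    intro a b hab
    rw [deleteEdges_adj] at hab
    obtain ⟨hab1, hab2⟩ := hab
    cases hab1 with
    | inl h => exact h
    | inr h =>
      exfalso
      apply hab2
      rw [edge_adj] at h
      rcases h.1 with ⟨rfl, rfl⟩ | ⟨rfl, rfl⟩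
      · exact rfl
      · exact Set.mem_singleton_iff.mpr Sym2.eq_swap
  · have hsub : ∀ e ∈ c.edges, e ∈ T.edgeSet := by
      intro e hce
      have h1 : e ∈ (T ⊔ SimpleGraph.edge u v).edgeSet := c.edges_subset_edgeSet hce
      rw [edgeSet_sup] at h1
      cases h1 with
      | inl h => exact h
      | inr h =>
        rw [edge_edgeSet_of_ne hne] at h
        exact absurd (h ▸ hce) he
    exact hT (c.transfer T hsub) (hc.transfer hsub)

/-- Any acyclic subgraph of a connected graph extends to a spanning tree. -/
lemma exists_spanning_tree {V : Type*} [Fintype V] (G H : SimpleGraph V)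
    (hconn : G.Connected) (hHG : H ≤ G) (hH : H.IsAcyclic) :
    ∃ T : SimpleGraph V, H ≤ T ∧ T ≤ G ∧ T.IsTree := by
  haveI : Finite (SimpleGraph V) :=
    Finite.of_injective (fun G => G.Adj) (fun a b h => by ext u v; exact iff_of_eq (congrFun (congrFun h u) v))
  set S : Set (SimpleGraph V) := {T | H ≤ T ∧ T ≤ G ∧ T.IsAcyclic} with hS
  obtain ⟨T, hTS, hmax⟩ := Set.Finite.exists_maximalFor id S (Set.toFinite S)
    ⟨H, le_refl H, hHG, hH⟩
  obtain ⟨hHT, hTG, hTac⟩ := hTS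
  have hadjreach : ∀ u v : V, G.Adj u v → T.Reachable u v := by
    intro u v huv
    by_contra hr
    have hne : u ≠ v := huv.ne
    have hTS' : T ⊔ SimpleGraph.edge u v ∈ S := by
      refine ⟨hHT.trans le_sup_left, sup_le hTG ?_, acyclic_sup_edge hTac hne hr⟩
      intro a b hab
      rw [edge_adj] at hab
      rcases hab.1 with ⟨rfl, rfl⟩ | ⟨rfl, rfl⟩
      · exact huv
      · exact huv.symm
    have heq := le_antisymm le_sup_left (hmax hTS' le_sup_left)
    apply hr
    have : T.Adj u v := by
      rw [show T = T ⊔ SimpleGraph.edge u v from heq]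
      right
      rw [edge_adj]
      exact ⟨Or.inl ⟨rfl, rfl⟩, hne⟩
    exact this.reachable
  have hpre : T.Preconnected := by
    intro a b
    obtain ⟨w⟩ := hconn.preconnected a b
    induction w with
    | nil => exact Reachable.refl _
    | cons h p ih => exact (hadjreach _ _ h).trans ih
  haveI := hconn.nonempty
  exact ⟨T, hHT, hTG, ⟨SimpleGraph.Connected.mk hpre, hTac⟩⟩


lemma walk_lift_induce {V : Type*} {G : SimpleGraph V} {s : Set V} {H : SimpleGraph V}
    (hH : ∀ a b, H.Adj a b → G.Adj a b ∧ a ∈ s ∧ b ∈ s) :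
    ∀ {a b : V} (p : H.Walk a b) (ha : a ∈ s) (hb : b ∈ s),
      ∃ q : (G.induce s).Walk ⟨a, ha⟩ ⟨b, hb⟩,
        q.edges.map (Sym2.map Subtype.val) = p.edges ∧
        q.support.map Subtype.val = p.support := by
  intro a b p
  induction p with
  | nil =>
    intro ha hb
    exact ⟨SimpleGraph.Walk.nil, by simp, by simp⟩
  | @cons a c b h p ih =>
    intro ha hb
    obtain ⟨hG, _, hcs⟩ := hH _ _ h
    obtain ⟨q, hq1, hq2⟩ := ih hcs hb
    refine ⟨SimpleGraph.Walk.cons (by simpa using hG : (G.induce s).Adj ⟨a, ha⟩ ⟨c, hcs⟩) q,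
      ?_, ?_⟩
    · simp [Walk.edges_cons, hq1]
    · simp [Walk.support_cons, hq2]

lemma spanning_acyclic_of_induce {V : Type*} {G : SimpleGraph V} {s : Set V}
    (hind : (G.induce s).IsAcyclic) {H : SimpleGraph V}
    (hH : ∀ a b, H.Adj a b → G.Adj a b ∧ a ∈ s ∧ b ∈ s) : H.IsAcyclic := by
  intro v c hc
  have hv : v ∈ s := by
    cases c with
    | nil => exact absurd rfl hc.ne_nil
    | cons h p => exact (hH _ _ h).2.1
  obtain ⟨q, hq1, hq2⟩ := walk_lift_induce hH c hv hv
  have hlen : q.length = c.length := by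
    have := congrArg List.length hq1
    simpa [SimpleGraph.Walk.length_edges] using this
  apply hind q
  rw [SimpleGraph.Walk.isCycle_def] at hc ⊢
  obtain ⟨ht, hnil, hnd⟩ := hc
  refine ⟨?_, ?_, ?_⟩
  · rw [SimpleGraph.Walk.isTrail_def] at ht ⊢
    exact (hq1 ▸ ht).of_map
  · intro h
    rw [h] at hlen
    simp only [SimpleGraph.Walk.length_nil] at hlen
    exact hnil (SimpleGraph.Walk.nil_iff_eq_nil.mp
      (SimpleGraph.Walk.nil_iff_length_eq.mpr hlen.symm))
  · have : c.support.tail = q.support.tail.map Subtype.val := by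
      rw [← hq2]; exact List.map_tail.symm
    exact (this ▸ hnd).of_map


/-- `fV1 G V1` is the minimum size of a feedback vertex set of `G` contained in
`V1` (a minimum `V1`-FVS). -/
noncomputable def fV1 {V : Type*} (G : SimpleGraph V) (V1 : Set V) : ℕ :=
  sInf {k | ∃ F : Set V, F ⊆ V1 ∧ IsFVS G F ∧ F.ncard = k}

/-- A `T_{G[V2]}`-tree: a spanning tree of `G` containing every edge of the
induced subgraph `G[V2]`. -/
def IsV2SpanningTree {V : Type*} (G T : SimpleGraph V) (V2 : Set V) : Prop :=
  T ≤ G ∧ T.IsTree ∧ ∀ u v : V, u ∈ V2 → v ∈ V2 → G.Adj u v → T.Adj u v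

/-- The `V1`-adjacency matching number `μ(G)`: the maximum, over all spanning
trees `T` of `G` containing all edges of `G[V2]`, of the number of 2-groups in a
`V1`-adjacency matching of the edges of `G` not in `T`, where a 2-group is a
pair of distinct edges sharing a common endpoint in `V1`. -/
noncomputable def adjMatchNum {V : Type*} (G : SimpleGraph V) (V1 V2 : Set V) : ℕ :=
  sSup {h | ∃ T : SimpleGraph V, IsV2SpanningTree G T V2 ∧
    ∃ e₁ e₂ : Fin h → Sym2 V,
      Function.Injective (Sum.elim e₁ e₂) ∧
      (∀ i, e₁ i ∈ G.edgeSet \ T.edgeSet ∧ e₂ i ∈ G.edgeSet \ T.edgeSet) ∧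
      (∀ i, ∃ x ∈ V1, x ∈ e₁ i ∧ x ∈ e₂ i)}

/-- For a connected graph `G` with partition `(V1, V2)` into two forests where
every vertex of `V1` has degree exactly 3:
`μ(G) ≥ β(G) − f_{V1}(G)`, where `β(G) = |E(G)| − |V(G)| + 1`. -/
theorem stmt_9 {V : Type*} [Fintype V] [DecidableEq V]
    (G : SimpleGraph V) [DecidableRel G.Adj] (hconn : G.Connected)
    (V1 V2 : Set V)
    (hpart : V1 ∪ V2 = Set.univ) (hdisj : Disjoint V1 V2)
    (hforest1 : (G.induce V1).IsAcyclic) (hforest2 : (G.induce V2).IsAcyclic)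
    (hdeg : ∀ v ∈ V1, G.degree v = 3) :
    (adjMatchNum G V1 V2 : ℤ) ≥
      ((G.edgeSet.ncard : ℤ) - (Fintype.card V : ℤ) + 1) - (fV1 G V1 : ℤ) := by
  classical
  haveI : Nonempty V := hconn.nonempty
  have hcompl : (V1ᶜ : Set V) = V2 := by
    ext x
    constructor
    · intro hx
      have : x ∈ V1 ∪ V2 := by rw [hpart]; trivial
      exact this.resolve_left hx
    · intro hx h1
      exact Set.disjoint_left.mp hdisj h1 hx
  have hmemInf : fV1 G V1 ∈ {k | ∃ F : Set V, F ⊆ V1 ∧ IsFVS G F ∧ F.ncard = k} := by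
    apply Nat.sInf_mem
    refine ⟨V1.ncard, V1, le_refl _, ?_, rfl⟩
    show (G.induce (V1ᶜ : Set V)).IsAcyclic
    rw [hcompl]
    exact hforest2
  obtain ⟨F, hFV1, hFVS, hFcard⟩ := hmemInf
  set H : SimpleGraph V :=
    { Adj := fun a b => G.Adj a b ∧ a ∉ F ∧ b ∉ F,
      symm := ⟨fun a b h => ⟨h.1.symm, h.2.2, h.2.1⟩⟩,
      loopless := ⟨fun a h => G.loopless.irrefl a h.1⟩ } with hHdef
  have hHG : H ≤ G := fun a b h => h.1
  have hHac : H.IsAcyclic := by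
    refine spanning_acyclic_of_induce (s := (Fᶜ : Set V)) hFVS ?_
    intro a b h
    exact ⟨h.1, h.2.1, h.2.2⟩
  obtain ⟨T, hHT, hTG, hTtree⟩ := exists_spanning_tree G H hconn hHG hHac
  haveI : DecidableRel T.Adj := Classical.decRel _
  have hTV2 : IsV2SpanningTree G T V2 := by
    refine ⟨hTG, hTtree, fun u v hu hv huv => hHT ⟨huv, ?_, ?_⟩⟩
    · exact fun hF => Set.disjoint_left.mp hdisj (hFV1 hF) hu
    · exact fun hF => Set.disjoint_left.mp hdisj (hFV1 hF) hv
  set K : Finset (Sym2 V) := G.edgeFinset \ T.edgeFinset with hKdef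
  have hTsub : T.edgeFinset ⊆ G.edgeFinset := edgeFinset_mono hTG
  have n1 : T.edgeFinset.card + 1 = Fintype.card V := hTtree.card_edgeFinset
  have n2 : T.edgeFinset.card ≤ G.edgeFinset.card := Finset.card_le_card hTsub
  have n3 : K.card = G.edgeFinset.card - T.edgeFinset.card := Finset.card_sdiff_of_subset hTsub
  -- every non-tree edge has an endpoint in F
  have hKF : ∀ e ∈ K, ∃ x, x ∈ F ∧ x ∈ e := by
    intro e he
    rw [hKdef, Finset.mem_sdiff, mem_edgeFinset, mem_edgeFinset] at he
    obtain ⟨heG, heT⟩ := he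
    induction e with
    | _ x y =>
      by_contra hcon
      push_neg at hcon
      apply heT
      rw [mem_edgeSet] at heG ⊢
      refine hHT ⟨heG, ?_, ?_⟩
      · exact fun hx => hcon x hx (by simp)
      · exact fun hy => hcon y hy (by simp)
  set a : Sym2 V → V :=
    fun e => if h : ∃ x, x ∈ F ∧ x ∈ e then h.choose else Classical.arbitrary V with hadef
  have ha : ∀ e ∈ K, a e ∈ F ∧ a e ∈ e := by
    intro e he
    rw [hadef]
    simp only [dif_pos (hKF e he)]
    exact (hKF e he).choose_spec
  set S : V → Finset (Sym2 V) := fun v => K.filter (fun e => a e = v) with hSdef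
  have hSK : ∀ v, ∀ e ∈ S v, e ∈ K ∧ a e = v := by
    intro v e he
    rw [hSdef, Finset.mem_filter] at he
    exact he
  -- each vertex of F carries at most 2 non-tree edges
  have hS2 : ∀ v ∈ F, (S v).card ≤ 2 := by
    intro v hvF
    have hdeg3 : G.degree v = 3 := hdeg v (hFV1 hvF)
    -- v has a neighbor in T
    have hVne : ∃ u : V, u ≠ v := by
      have : 0 < G.degree v := by omega
      rw [← card_neighborFinset_eq_degree, Finset.card_pos] at this
      obtain ⟨u, hu⟩ := this
      exact ⟨u, (G.ne_of_adj (by rwa [mem_neighborFinset] at hu)).symm⟩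
    obtain ⟨u, hu⟩ := hVne
    obtain ⟨p⟩ := hTtree.isConnected.preconnected v u
    have hTadj : ∃ w, T.Adj v w := by
      cases p with
      | nil => exact absurd rfl hu.symm
      | cons h _ => exact ⟨_, h⟩
    obtain ⟨w, hw⟩ := hTadj
    have hsub : S v ⊆ (G.incidenceFinset v).erase s(v, w) := by
      intro e he
      obtain ⟨heK, hae⟩ := hSK v e he
      rw [Finset.mem_erase]
      constructor
      · intro heq
        have : e ∈ T.edgeFinset := by
          rw [mem_edgeFinset, heq, mem_edgeSet]
          exact hw
        rw [hKdef, Finset.mem_sdiff] at heK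
        exact heK.2 this
      · rw [mem_incidenceFinset]
        refine ⟨?_, ?_⟩
        · rw [hKdef, Finset.mem_sdiff, mem_edgeFinset] at heK
          exact heK.1
        · rw [← hae]
          exact (ha e heK).2
    have hvw : s(v, w) ∈ G.incidenceFinset v := by
      rw [mem_incidenceFinset]
      exact ⟨(mem_edgeSet G).mpr (hTG hw), by simp⟩
    have := Finset.card_le_card hsub
    rw [Finset.card_erase_of_mem hvw, card_incidenceFinset_eq_degree, hdeg3] at this
    omega
  -- K is the disjoint union of the fibers
  have hKeq : K = F.toFinset.biUnion S := by
    ext e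
    constructor
    · intro he
      rw [Finset.mem_biUnion]
      refine ⟨a e, Set.mem_toFinset.mpr (ha e he).1, ?_⟩
      rw [hSdef, Finset.mem_filter]
      exact ⟨he, rfl⟩
    · intro he
      rw [Finset.mem_biUnion] at he
      obtain ⟨v, _, hv⟩ := he
      exact (hSK v e hv).1
  have hdisjS : ∀ x ∈ F.toFinset, ∀ y ∈ F.toFinset, x ≠ y → Disjoint (S x) (S y) := by
    intro x _ y _ hxy
    rw [Finset.disjoint_left]
    intro e hex hey
    exact hxy ((hSK x e hex).2 ▸ (hSK y e hey).2 ▸ rfl)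
  have hKsum : K.card = ∑ v ∈ F.toFinset, (S v).card := by
    rw [hKeq, Finset.card_biUnion hdisjS]
  set P : Finset V := F.toFinset.filter (fun v => (S v).card = 2) with hPdef
  have n4 : K.card ≤ F.toFinset.card + P.card := by
    have step1 : ∀ v ∈ F.toFinset, (S v).card ≤ 1 + (if (S v).card = 2 then 1 else 0) := by
      intro v hv
      have := hS2 v (Set.mem_toFinset.mp hv)
      split <;> omega
    calc K.card = ∑ v ∈ F.toFinset, (S v).card := hKsum
      _ ≤ ∑ v ∈ F.toFinset, (1 + (if (S v).card = 2 then 1 else 0)) :=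
          Finset.sum_le_sum step1
      _ = F.toFinset.card + P.card := by
          rw [Finset.sum_add_distrib, Finset.sum_const, smul_eq_mul, mul_one, hPdef,
            Finset.card_filter]
  -- construct the matching
  have hmem : P.card ∈ {h | ∃ T' : SimpleGraph V, IsV2SpanningTree G T' V2 ∧
      ∃ e₁ e₂ : Fin h → Sym2 V,
        Function.Injective (Sum.elim e₁ e₂) ∧
        (∀ i, e₁ i ∈ G.edgeSet \ T'.edgeSet ∧ e₂ i ∈ G.edgeSet \ T'.edgeSet) ∧
        (∀ i, ∃ x ∈ V1, x ∈ e₁ i ∧ x ∈ e₂ i)} := by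
    refine ⟨T, hTV2, ?_⟩
    set ν : Fin P.card → P := fun i => P.equivFin.symm i with hνdef
    have hνinj : Function.Injective (fun i => (ν i : V)) :=
      fun i j hij => P.equivFin.symm.injective (Subtype.ext hij)
    have hcard2 : ∀ i : Fin P.card, (S ((ν i : P) : V)).card = 2 := by
      intro i
      exact (Finset.mem_filter.mp (ν i).2).2
    have hex : ∀ i : Fin P.card, ∃ x y : Sym2 V, x ≠ y ∧ S ((ν i : P) : V) = {x, y} := by
      intro i
      exact Finset.card_eq_two.mp (hcard2 i)
    choose e₁ e₂ hne12 hSet using hex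
    have he₁S : ∀ i, e₁ i ∈ S ((ν i : P) : V) := by
      intro i; rw [hSet i]; exact Finset.mem_insert_self _ _
    have he₂S : ∀ i, e₂ i ∈ S ((ν i : P) : V) := by
      intro i; rw [hSet i]; exact Finset.mem_insert_of_mem (Finset.mem_singleton_self _)
    have hfiber : ∀ (i j : Fin P.card) (e : Sym2 V),
        e ∈ S ((ν i : P) : V) → e ∈ S ((ν j : P) : V) → i = j := by
      intro i j e hi hj
      apply hνinj
      show ((ν i : P) : V) = ((ν j : P) : V)
      rw [← (hSK _ e hi).2, ← (hSK _ e hj).2]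
    refine ⟨e₁, e₂, ?_, ?_, ?_⟩
    · rintro (i | i) (j | j) hij <;> simp only [Sum.elim_inl, Sum.elim_inr] at hij
      · exact congrArg Sum.inl (hfiber i j (e₁ i) (he₁S i) (hij ▸ he₁S j))
      · exfalso
        have := hfiber i j (e₁ i) (he₁S i) (hij ▸ he₂S j)
        exact hne12 i (this ▸ hij)
      · exfalso
        have := hfiber i j (e₂ i) (he₂S i) (hij ▸ he₁S j)
        exact hne12 j (this ▸ hij).symm
      · exact congrArg Sum.inr (hfiber i j (e₂ i) (he₂S i) (hij ▸ he₂S j))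
    · intro i
      constructor
      · have := (hSK _ _ (he₁S i)).1
        rw [hKdef, Finset.mem_sdiff, mem_edgeFinset, mem_edgeFinset] at this
        exact this
      · have := (hSK _ _ (he₂S i)).1
        rw [hKdef, Finset.mem_sdiff, mem_edgeFinset, mem_edgeFinset] at this
        exact this
    · intro i
      refine ⟨((ν i : P) : V), ?_, ?_, ?_⟩
      · exact hFV1 (Set.mem_toFinset.mp (Finset.mem_filter.mp (ν i).2).1)
      · have h1 := hSK _ _ (he₁S i)
        exact h1.2 ▸ (ha _ h1.1).2
      · have h1 := hSK _ _ (he₂S i)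
        exact h1.2 ▸ (ha _ h1.1).2
  have hbdd : BddAbove {h | ∃ T' : SimpleGraph V, IsV2SpanningTree G T' V2 ∧
      ∃ e₁ e₂ : Fin h → Sym2 V,
        Function.Injective (Sum.elim e₁ e₂) ∧
        (∀ i, e₁ i ∈ G.edgeSet \ T'.edgeSet ∧ e₂ i ∈ G.edgeSet \ T'.edgeSet) ∧
        (∀ i, ∃ x ∈ V1, x ∈ e₁ i ∧ x ∈ e₂ i)} := by
    refine ⟨Fintype.card (Sym2 V), ?_⟩
    rintro h ⟨T', _, e₁, e₂, hinj, _, _⟩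
    have hinj1 : Function.Injective e₁ := by
      intro i j hij
      have := hinj (show Sum.elim e₁ e₂ (Sum.inl i) = Sum.elim e₁ e₂ (Sum.inl j) from hij)
      exact Sum.inl_injective this
    calc h = Fintype.card (Fin h) := (Fintype.card_fin h).symm
      _ ≤ Fintype.card (Sym2 V) := Fintype.card_le_of_injective e₁ hinj1
  have n7 : P.card ≤ adjMatchNum G V1 V2 := le_csSup hbdd hmem
  have n5 : F.toFinset.card = fV1 G V1 := by
    rw [← hFcard, Set.ncard_eq_toFinset_card']
  have n6 : G.edgeSet.ncard = G.edgeFinset.card := by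
    rw [Set.ncard_eq_toFinset_card', edgeFinset]
  rw [n6]
  omega
end

section
/- Let G be a connected simple undirected graph whose vertex set is partitioned into (V1, V2) such that both induced subgraphs G[V1] and G[V2] are forests. Then the V1-adjacency matching number μ(G) equals the maximum integer h for which there exist h pairwise disjoint unordered pairs {e_1, e_1'}, …, {e_h, e_h'} of edges of G (all 2h edges distinct), such that for each i the edges e_i and e_i' are V1-adjacent, and the graph obtained from G by deleting these 2h edges is connected. -/
open SimpleGraph

private lemma connected_sdiff_of_reachable {V : Type*} {T : SimpleGraph V} (hT : T.Connected)
    {a b : V} (hr : (T \ SimpleGraph.fromEdgeSet {s(a, b)}).Reachable a b) :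
    (T \ SimpleGraph.fromEdgeSet {s(a, b)}).Connected := by
  have key : ∀ {x y : V}, T.Reachable x y →
      (T \ SimpleGraph.fromEdgeSet {s(a, b)}).Reachable x y := by
    intro x y hxy
    obtain ⟨p⟩ := hxy
    induction p with
    | nil => exact Reachable.refl _
    | @cons u v w h q ih =>
      refine Reachable.trans ?_ ih
      by_cases he : s(u, v) = s(a, b)
      · rw [Sym2.eq_iff] at he
        rcases he with ⟨rfl, rfl⟩ | ⟨rfl, rfl⟩
        · exact hr
        · exact hr.symm
      · refine SimpleGraph.Adj.reachable ?_
        rw [SimpleGraph.sdiff_adj, SimpleGraph.fromEdgeSet_adj]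
        exact ⟨h, fun hf => he hf.1⟩
  have : Nonempty V := hT.nonempty
  exact ⟨fun x y => key (hT.preconnected x y)⟩

private lemma exists_spanning_tree_of_le {V : Type*} [Fintype V] {G H : SimpleGraph V}
    (hG : G.Connected) (hH : H ≤ G) (hHa : H.IsAcyclic) :
    ∃ T : SimpleGraph V, H ≤ T ∧ T ≤ G ∧ T.IsTree := by
  classical
  have key : ∀ (n : ℕ) (T : SimpleGraph V), T.edgeSet.ncard ≤ n → H ≤ T → T ≤ G → T.Connected →
      ∃ T' : SimpleGraph V, H ≤ T' ∧ T' ≤ G ∧ T'.IsTree := by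
    intro n
    induction n with
    | zero =>
      intro T hcard hHT hTG hTc
      refine ⟨T, hHT, hTG, hTc, ?_⟩
      intro v c hc
      cases c with
      | nil => exact hc.ne_nil rfl
      | cons h q =>
        have hmem : s(v, _) ∈ T.edgeSet := h
        have hempty : T.edgeSet = ∅ := (Set.ncard_eq_zero (Set.toFinite _)).mp
          (Nat.le_zero.mp hcard)
        rw [hempty] at hmem
        exact hmem
    | succ n ih =>
      intro T hcard hHT hTG hTc
      by_cases hac : T.IsAcyclic
      · exact ⟨T, hHT, hTG, hTc, hac⟩
      · rw [SimpleGraph.IsAcyclic] at hac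
        push_neg at hac
        obtain ⟨v, c, hc⟩ := hac
        have hedge : ∃ e ∈ c.edges, e ∉ H.edgeSet := by
          by_contra hall
          push_neg at hall
          exact hHa _ (hc.transfer hall)
        obtain ⟨e, hec, heH⟩ := hedge
        revert hec heH
        induction e using Sym2.ind with
        | _ a b =>
        intro hec heH
        have hreach : (T \ SimpleGraph.fromEdgeSet {s(a, b)}).Reachable a b :=
          (SimpleGraph.adj_and_reachable_delete_edges_iff_exists_cycle.mpr ⟨v, c, hc, hec⟩).2
        set T' := T \ SimpleGraph.fromEdgeSet {s(a, b)} with hT'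
        have hHT' : H ≤ T' := by
          intro x y hxy
          rw [hT', SimpleGraph.sdiff_adj, SimpleGraph.fromEdgeSet_adj]
          refine ⟨hHT hxy, ?_⟩
          rintro ⟨hmem, -⟩
          rw [Set.mem_singleton_iff] at hmem
          exact heH (hmem ▸ (H.mem_edgeSet.mpr hxy))
        have hT'G : T' ≤ G := le_trans sdiff_le hTG
        have hT'c : T'.Connected := connected_sdiff_of_reachable hTc hreach
        have hcard' : T'.edgeSet.ncard ≤ n := by
          have heT : s(a, b) ∈ T.edgeSet := c.edges_subset_edgeSet hec
          have heq : T' = T.deleteEdges {s(a, b)} := rfl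
          rw [heq, SimpleGraph.edgeSet_deleteEdges]
          have hlt : (T.edgeSet \ {s(a, b)}).ncard < T.edgeSet.ncard :=
            Set.ncard_diff_singleton_lt_of_mem heT (Set.toFinite _)
          omega
        exact ih T' hcard' hHT' hT'G hT'c
  exact key G.edgeSet.ncard G le_rfl hH le_rfl hG

private def sideGraph {V : Type*} (G : SimpleGraph V) (S : Set V) : SimpleGraph V where
  Adj u v := G.Adj u v ∧ u ∈ S ∧ v ∈ S
  symm := ⟨fun _ _ ⟨h, hu, hv⟩ => ⟨h.symm, hv, hu⟩⟩
  loopless := ⟨fun u ⟨h, _⟩ => G.loopless.irrefl u h⟩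

private def sideHom {V : Type*} (G : SimpleGraph V) (S : Set V) :
    G.induce S →g sideGraph G S :=
  ⟨Subtype.val, fun {a b} h => ⟨h, a.2, b.2⟩⟩

private def liftWalk {V : Type*} {G : SimpleGraph V} {S : Set V} :
    ∀ {u w : V} (_ : (sideGraph G S).Walk u w) (hu : u ∈ S) (hw : w ∈ S),
      (G.induce S).Walk ⟨u, hu⟩ ⟨w, hw⟩
  | _, _, SimpleGraph.Walk.nil, _, _ => SimpleGraph.Walk.nil
  | _, _, SimpleGraph.Walk.cons h q, hu, hw =>
      SimpleGraph.Walk.cons (show (G.induce S).Adj ⟨_, hu⟩ ⟨_, h.2.2⟩ from h.1)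
        (liftWalk q h.2.2 hw)

private lemma liftWalk_map {V : Type*} {G : SimpleGraph V} {S : Set V} :
    ∀ {u w : V} (p : (sideGraph G S).Walk u w) (hu : u ∈ S) (hw : w ∈ S),
      (liftWalk p hu hw).map (sideHom G S) = p
  | _, _, SimpleGraph.Walk.nil, _, _ => by simp [liftWalk]; rfl
  | _, _, SimpleGraph.Walk.cons h q, hu, hw => by
      simp only [liftWalk, SimpleGraph.Walk.map_cons, liftWalk_map q h.2.2 hw]; rfl

private lemma sideGraph_isAcyclic {V : Type*} {G : SimpleGraph V} {S : Set V}
    (h : (G.induce S).IsAcyclic) : (sideGraph G S).IsAcyclic := by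
  intro v c hc
  have hv : v ∈ S := by
    cases c with
    | nil => exact absurd hc (SimpleGraph.Walk.IsCycle.not_of_nil)
    | cons h q => exact h.2.1
  have hinj : Function.Injective (sideHom G S) := Subtype.val_injective
  have hc' : ((liftWalk c hv hv).map (sideHom G S)).IsCycle := by
    rw [liftWalk_map]; exact hc
  exact h _ ((SimpleGraph.Walk.map_isCycle_iff_of_injective hinj).mp hc')

/-- For a connected graph `G` with partition `(V1, V2)` into two forests, the
`V1`-adjacency matching number `μ(G)` equals the maximum integer `h` such that
there exist `h` pairwise disjoint pairs `{e₁ i, e₂ i}` of edges of `G` (all `2h`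
edges distinct), each pair sharing a common endpoint in `V1`, such that deleting
these `2h` edges from `G` leaves a connected graph. -/
theorem stmt_11 {V : Type*} [Fintype V] [DecidableEq V]
    (G : SimpleGraph V) [DecidableRel G.Adj] (hconn : G.Connected)
    (V1 V2 : Set V)
    (hpart : V1 ∪ V2 = Set.univ) (hdisj : Disjoint V1 V2)
    (hforest1 : (G.induce V1).IsAcyclic) (hforest2 : (G.induce V2).IsAcyclic) :
    adjMatchNum G V1 V2 =
      sSup {h | ∃ e₁ e₂ : Fin h → Sym2 V,
        Function.Injective (Sum.elim e₁ e₂) ∧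
        (∀ i, e₁ i ∈ G.edgeSet ∧ e₂ i ∈ G.edgeSet) ∧
        (∀ i, ∃ x ∈ V1, x ∈ e₁ i ∧ x ∈ e₂ i) ∧
        (G.deleteEdges (Set.range e₁ ∪ Set.range e₂)).Connected} := by
  rw [adjMatchNum]
  congr 1
  ext h
  constructor
  · rintro ⟨T, ⟨hTG, hTtree, hTV2⟩, e₁, e₂, hinj, hmem, hV1⟩
    refine ⟨e₁, e₂, hinj, fun i => ⟨(hmem i).1.1, (hmem i).2.1⟩, hV1, ?_⟩
    have hle : T ≤ G.deleteEdges (Set.range e₁ ∪ Set.range e₂) := by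
      intro u v huv
      rw [SimpleGraph.deleteEdges_adj]
      refine ⟨hTG huv, ?_⟩
      rintro (⟨i, hi⟩ | ⟨i, hi⟩)
      · exact (hmem i).1.2 (hi ▸ T.mem_edgeSet.mpr huv)
      · exact (hmem i).2.2 (hi ▸ T.mem_edgeSet.mpr huv)
    exact hTtree.isConnected.mono hle
  · rintro ⟨e₁, e₂, hinj, hmem, hV1, hconn'⟩
    set D := Set.range e₁ ∪ Set.range e₂ with hD
    have hH2le : sideGraph G V2 ≤ G.deleteEdges D := by
      rintro u v ⟨hadj, hu, hv⟩
      rw [SimpleGraph.deleteEdges_adj]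
      refine ⟨hadj, ?_⟩
      rintro (⟨i, hi⟩ | ⟨i, hi⟩)
      · obtain ⟨x, hx1, hx2, -⟩ := hV1 i
        rw [hi, Sym2.mem_iff] at hx2
        rcases hx2 with rfl | rfl
        · exact Set.disjoint_left.mp hdisj hx1 hu
        · exact Set.disjoint_left.mp hdisj hx1 hv
      · obtain ⟨x, hx1, -, hx2⟩ := hV1 i
        rw [hi, Sym2.mem_iff] at hx2
        rcases hx2 with rfl | rfl
        · exact Set.disjoint_left.mp hdisj hx1 hu
        · exact Set.disjoint_left.mp hdisj hx1 hv
    obtain ⟨T, hH2T, hTle, hTtree⟩ :=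
      exists_spanning_tree_of_le hconn' hH2le (sideGraph_isAcyclic hforest2)
    have hTG : T ≤ G := hTle.trans (G.deleteEdges_le D)
    have hTedges : T.edgeSet ⊆ G.edgeSet \ D := by
      rw [← SimpleGraph.edgeSet_deleteEdges]
      exact SimpleGraph.edgeSet_subset_edgeSet.mpr hTle
    refine ⟨T, ⟨hTG, hTtree, fun u v hu hv hadj => hH2T ⟨hadj, hu, hv⟩⟩,
      e₁, e₂, hinj, fun i => ?_, hV1⟩
    constructor
    · exact ⟨(hmem i).1, fun hT => (hTedges hT).2 (Set.mem_union_left _ ⟨i, rfl⟩)⟩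
    · exact ⟨(hmem i).2, fun hT => (hTedges hT).2 (Set.mem_union_right _ ⟨i, rfl⟩)⟩
end
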